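/- arXiv:0807.1201 — 5 statements merged into one kernel-verified Lean document; each statement's English description precedes it below -/
import Mathlib

section
/- Let X_1,...,X_m be i.i.d. real random variables with common distribution p, and let ν_m = (1/m)∑ δ_{X_i} be the empirical measure. Then E[∫_ℝ |F_p(t) - F_{ν_m}(t)| dt] ≤ (1/√m) ∫_ℝ sqrt(F_p(t)(1-F_p(t))) dt, where F_q denotes the cumulative distribution function of q. -/
open MeasureTheory ProbabilityTheory Real


lemma aux_abs_le_sqrt {Ω : Type*} [MeasurableSpace Ω] (μ : Measure Ω) [IsProbabilityMeasure μ]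
    {Z : Ω → ℝ} (hZ : MemLp Z 2 μ) :
    ∫ ω, |Z ω| ∂μ ≤ Real.sqrt (∫ ω, Z ω ^ 2 ∂μ) := by
  have hconj : (2:ℝ).HolderConjugate 2 := Real.HolderConjugate.two_two
  have h := integral_mul_le_Lp_mul_Lq_of_nonneg (μ := μ) hconj
    (f := fun ω => |Z ω|) (g := fun _ => (1:ℝ))
    (ae_of_all _ fun ω => abs_nonneg _) (ae_of_all _ fun _ => zero_le_one)
    (by simpa [ENNReal.ofReal_ofNat, Real.norm_eq_abs] using hZ.norm) (by simp [ENNReal.ofReal_ofNat]; exact memLp_const 1)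
  simp only [mul_one] at h
  have h1 : ∀ ω, |Z ω| ^ (2:ℝ) = Z ω ^ 2 := fun ω => by
    rw [Real.rpow_two, sq_abs]
  have h2 : ((1:ℝ)) ^ (2:ℝ) = 1 := by norm_num
  simp only [h1, h2] at h
  calc ∫ ω, |Z ω| ∂μ ≤ (∫ ω, Z ω ^ 2 ∂μ) ^ (1/2 : ℝ) * (∫ _ω : Ω, (1:ℝ) ∂μ) ^ (1/2 : ℝ) := h
    _ = Real.sqrt (∫ ω, Z ω ^ 2 ∂μ) := by
        simp [Real.sqrt_eq_rpow, measure_univ]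


lemma aux_fubini_bound {Ω : Type*} [MeasurableSpace Ω] (μ : Measure Ω) [IsProbabilityMeasure μ]
    (G : Ω → ℝ → ℝ) (hG : Measurable (Function.uncurry G))
    (hGnn : ∀ ω t, 0 ≤ G ω t)
    (B : ℝ → ℝ) (hB : Integrable B) (hBnn : ∀ t, 0 ≤ B t)
    (hint : ∀ t, Integrable (fun ω => G ω t) μ)
    (key : ∀ t, ∫ ω, G ω t ∂μ ≤ B t) :
    ∫ ω, (∫ t, G ω t) ∂μ ≤ ∫ t, B t := by
  have hGm : ∀ ω, Measurable (G ω) := fun ω => hG.comp (measurable_prodMk_left)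
  have h1 : ∀ ω, ∫ t, G ω t = (∫⁻ t, ENNReal.ofReal (G ω t)).toReal := fun ω =>
    integral_eq_lintegral_of_nonneg_ae (ae_of_all _ fun t => hGnn ω t)
      (hGm ω).aestronglyMeasurable
  have hmeasω : Measurable fun ω => (∫⁻ t, ENNReal.ofReal (G ω t)).toReal :=
    (Measurable.lintegral_prod_right (f := fun ω t => ENNReal.ofReal (G ω t)) hG.ennreal_ofReal).ennreal_toReal
  have h2 : ∫ ω, (∫ t, G ω t) ∂μ
      = (∫⁻ ω, ENNReal.ofReal ((∫⁻ t, ENNReal.ofReal (G ω t)).toReal) ∂μ).toReal := by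
    simp_rw [h1]
    exact integral_eq_lintegral_of_nonneg_ae (ae_of_all _ fun ω => ENNReal.toReal_nonneg)
      hmeasω.aestronglyMeasurable
  have h3 : (∫⁻ ω, ENNReal.ofReal ((∫⁻ t, ENNReal.ofReal (G ω t)).toReal) ∂μ)
      ≤ ∫⁻ t, ∫⁻ ω, ENNReal.ofReal (G ω t) ∂μ := by
    rw [← lintegral_lintegral_swap (f := fun ω t => ENNReal.ofReal (G ω t)) hG.ennreal_ofReal.aemeasurable]
    exact lintegral_mono fun ω => ENNReal.ofReal_toReal_le
  have h4 : (∫⁻ t, ∫⁻ ω, ENNReal.ofReal (G ω t) ∂μ) ≤ ∫⁻ t, ENNReal.ofReal (B t) := by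
    refine lintegral_mono fun t => ?_
    rw [← ofReal_integral_eq_lintegral_ofReal (hint t) (ae_of_all _ fun ω => hGnn ω t)]
    exact ENNReal.ofReal_le_ofReal (key t)
  have h5 : (∫⁻ t, ENNReal.ofReal (B t)) = ENNReal.ofReal (∫ t, B t) :=
    (ofReal_integral_eq_lintegral_ofReal hB (ae_of_all _ hBnn)).symm
  rw [h2]
  calc (∫⁻ ω, ENNReal.ofReal ((∫⁻ t, ENNReal.ofReal (G ω t)).toReal) ∂μ).toReal
      ≤ (ENNReal.ofReal (∫ t, B t)).toReal :=
        ENNReal.toReal_mono ENNReal.ofReal_ne_top (h3.trans (h4.trans_eq h5))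
    _ = ∫ t, B t := ENNReal.toReal_ofReal (integral_nonneg hBnn)

lemma aux_key {Ω : Type*} [MeasurableSpace Ω] (μ : Measure Ω) [IsProbabilityMeasure μ]
    (p : Measure ℝ) [IsProbabilityMeasure p] (m : ℕ) (hm : 0 < m)
    (X : Fin m → Ω → ℝ) (hX : ∀ i, Measurable (X i))
    (hlaw : ∀ i, Measure.map (X i) μ = p)
    (hindep : iIndepFun X μ) (t : ℝ) :
    ∫ ω, |(p (Set.Iic t)).toReal -
        (1 / m : ℝ) * ∑ i, (if X i ω ≤ t then (1 : ℝ) else 0)| ∂μ ≤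
      Real.sqrt ((p (Set.Iic t)).toReal * (1 - (p (Set.Iic t)).toReal)) / Real.sqrt m := by
  classical
  have hmR : (0:ℝ) < m := Nat.cast_pos.mpr hm
  set F : ℝ := (p (Set.Iic t)).toReal with hFdef
  have hF0 : 0 ≤ F := ENNReal.toReal_nonneg
  have hF1 : F ≤ 1 := by
    have h := ENNReal.toReal_mono ENNReal.one_ne_top (prob_le_one (μ := p) (s := Set.Iic t))
    simpa using h
  set Y : Fin m → Ω → ℝ := fun i ω => if X i ω ≤ t then 1 else 0 with hYdef
  have hYmeas : ∀ i, Measurable (Y i) := fun i =>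
    Measurable.ite (measurableSet_le (hX i) measurable_const) measurable_const measurable_const
  have hYL2 : ∀ i, MemLp (Y i) 2 μ := fun i =>
    MemLp.of_bound (hYmeas i).aestronglyMeasurable 1
      (ae_of_all _ fun ω => by by_cases h : X i ω ≤ t <;> simp [Y, h])
  have hEY : ∀ i, ∫ ω, Y i ω ∂μ = F := by
    intro i
    have heq : Y i = Set.indicator (X i ⁻¹' Set.Iic t) (fun _ => (1:ℝ)) := by
      ext ω; by_cases h : X i ω ≤ t <;>
        simp [Y, h, Set.indicator_apply, Set.mem_preimage, Set.mem_Iic]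
    rw [heq, integral_indicator_const (1:ℝ) ((hX i) measurableSet_Iic)]
    have : μ (X i ⁻¹' Set.Iic t) = p (Set.Iic t) := by
      rw [← hlaw i, Measure.map_apply (hX i) measurableSet_Iic]
    rw [measureReal_def, this]; simp [hFdef]
  have hVarY : ∀ i, variance (Y i) μ = F * (1 - F) := by
    intro i
    rw [variance_eq_sub (hYL2 i)]
    have h2 : (Y i) ^ 2 = Y i := by
      ext ω; by_cases h : X i ω ≤ t <;> simp [Y, h]
    rw [h2, hEY i]; ring
  have hYindep : iIndepFun Y μ := by
    have := hindep.comp (fun _ => fun x : ℝ => if x ≤ t then (1:ℝ) else 0)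
      (fun _ => Measurable.ite measurableSet_Iic measurable_const measurable_const)
    exact this
  have hpair : Set.Pairwise ↑(Finset.univ : Finset (Fin m))
      (fun i j => IndepFun (Y i) (Y j) μ) := fun i _ j _ hij => hYindep.indepFun hij
  have hVarSum : variance (∑ i, Y i) μ = m * (F * (1 - F)) := by
    rw [IndepFun.variance_sum (fun i _ => hYL2 i) hpair]
    simp [hVarY, Finset.sum_const, Finset.card_univ, nsmul_eq_mul]
  have hsum_apply : ∀ ω, (∑ i, Y i) ω = ∑ i, Y i ω := fun ω => by
    simp [Finset.sum_apply]
  set S : Ω → ℝ := fun ω => (1 / m : ℝ) * ∑ i, Y i ω with hSdef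
  have hSL2 : MemLp S 2 μ := by
    have h := (memLp_finset_sum' (Finset.univ) (fun i _ => hYL2 i)).const_mul (1 / m : ℝ)
    convert h using 1
    funext ω
    rw [hsum_apply]
  have hVarS : variance S μ = F * (1 - F) / m := by
    have h := variance_const_mul (1 / m : ℝ) (∑ i, Y i) μ
    have : S = fun ω => (1 / m : ℝ) * (∑ i, Y i) ω := by
      funext ω; rw [hsum_apply]
    rw [this, h, hVarSum]
    field_simp
  have hES : ∫ ω, S ω ∂μ = F := by
    rw [hSdef]
    rw [integral_const_mul]
    rw [integral_finset_sum _ (fun i _ => (hYL2 i).integrable one_le_two)]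
    simp only [hEY, Finset.sum_const, Finset.card_univ, Fintype.card_fin, nsmul_eq_mul]
    field_simp
  -- Z := F - S
  have hZL2 : MemLp (fun ω => F - S ω) 2 μ := (memLp_const F).sub hSL2
  have hZsq : ∫ ω, (F - S ω) ^ 2 ∂μ = F * (1 - F) / m := by
    have h1 : variance S μ = ∫ ω, (F - S ω) ^ 2 ∂μ := by
      rw [variance_eq_integral hSL2.aestronglyMeasurable.aemeasurable, hES]
      refine integral_congr_ae (ae_of_all _ fun ω => ?_)
      ring
    rw [← h1, hVarS]
  calc ∫ ω, |F - S ω| ∂μ ≤ Real.sqrt (∫ ω, (F - S ω) ^ 2 ∂μ) := aux_abs_le_sqrt μ hZL2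
    _ = Real.sqrt (F * (1 - F)) / Real.sqrt m := by
        rw [hZsq, Real.sqrt_div (mul_nonneg hF0 (by linarith))]


/-- If `X₁,...,X_m` are i.i.d. with law `p` and `ν_m` is the empirical measure, then
`E ∫ |F_p(t) - F_{ν_m}(t)| dt ≤ (1/√m) ∫ sqrt(F_p(t)(1-F_p(t))) dt`. -/
theorem stmt2 {Ω : Type*} [MeasurableSpace Ω] (μ : Measure Ω) [IsProbabilityMeasure μ]
    (p : Measure ℝ) [IsProbabilityMeasure p] (m : ℕ) (hm : 0 < m)
    (X : Fin m → Ω → ℝ) (hX : ∀ i, Measurable (X i))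
    (hlaw : ∀ i, Measure.map (X i) μ = p)
    (hindep : iIndepFun X μ)
    (hΔ : Integrable (fun t =>
      Real.sqrt ((p (Set.Iic t)).toReal * (1 - (p (Set.Iic t)).toReal)))) :
    ∫ ω, (∫ t, |(p (Set.Iic t)).toReal -
        (1 / m : ℝ) * ∑ i, (if X i ω ≤ t then (1 : ℝ) else 0)|) ∂μ ≤
      (1 / Real.sqrt m) *
        ∫ t, Real.sqrt ((p (Set.Iic t)).toReal * (1 - (p (Set.Iic t)).toReal)) := by
  classical
  have hmR : (0:ℝ) < m := Nat.cast_pos.mpr hm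
  have hFmeas : Measurable fun t : ℝ => (p (Set.Iic t)).toReal := by
    refine Monotone.measurable fun a b hab => ?_
    exact ENNReal.toReal_mono (measure_ne_top p _)
      (measure_mono (Set.Iic_subset_Iic.mpr hab))
  set G : Ω → ℝ → ℝ := fun ω t => |(p (Set.Iic t)).toReal -
      (1 / m : ℝ) * ∑ i, (if X i ω ≤ t then (1 : ℝ) else 0)| with hGdef
  have hGuncurry : Measurable (Function.uncurry G) := by
    apply Measurable.abs
    refine ((hFmeas.comp measurable_snd).sub (measurable_const.mul ?_))
    refine Finset.measurable_sum _ fun i _ => ?_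
    exact Measurable.ite (measurableSet_le ((hX i).comp measurable_fst) measurable_snd)
      measurable_const measurable_const
  have hGnn : ∀ ω t, 0 ≤ G ω t := fun ω t => abs_nonneg _
  have hGbd : ∀ ω t, |G ω t| ≤ 2 := by
    intro ω t
    have h0 : (0:ℝ) ≤ ∑ i, (if X i ω ≤ t then (1:ℝ) else 0) :=
      Finset.sum_nonneg fun i _ => by split <;> norm_num
    have h1 : (∑ i, (if X i ω ≤ t then (1:ℝ) else 0)) ≤ m := by
      calc (∑ i, (if X i ω ≤ t then (1:ℝ) else 0)) ≤ ∑ _i : Fin m, (1:ℝ) :=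
            Finset.sum_le_sum fun i _ => by split <;> norm_num
        _ = m := by simp
    have hS0 : (0:ℝ) ≤ (1 / m : ℝ) * ∑ i, (if X i ω ≤ t then (1:ℝ) else 0) := by positivity
    have hS1 : (1 / m : ℝ) * (∑ i, (if X i ω ≤ t then (1:ℝ) else 0)) ≤ 1 := by
      rw [div_mul_eq_mul_div, one_mul, div_le_one hmR]; exact h1
    have hF0 : (0:ℝ) ≤ (p (Set.Iic t)).toReal := ENNReal.toReal_nonneg
    have hF1 : (p (Set.Iic t)).toReal ≤ 1 := by
      have h := ENNReal.toReal_mono ENNReal.one_ne_top (prob_le_one (μ := p) (s := Set.Iic t))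
      simpa using h
    rw [hGdef, abs_abs]
    rw [abs_sub_le_iff]
    constructor <;> linarith
  have hGint : ∀ t, Integrable (fun ω => G ω t) μ := by
    intro t
    have hmeas : Measurable fun ω => G ω t := by
      apply Measurable.abs
      refine (measurable_const.sub (measurable_const.mul ?_))
      refine Finset.measurable_sum _ fun i _ => ?_
      exact Measurable.ite (measurableSet_le (hX i) measurable_const)
        measurable_const measurable_const
    exact memLp_one_iff_integrable.mp (MemLp.of_bound hmeas.aestronglyMeasurable 2
      (ae_of_all _ fun ω => by simpa using hGbd ω t))
  have hB : Integrable (fun t => Real.sqrt ((p (Set.Iic t)).toReal *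
      (1 - (p (Set.Iic t)).toReal)) / Real.sqrt m) := hΔ.div_const _
  have hBnn : ∀ t, 0 ≤ Real.sqrt ((p (Set.Iic t)).toReal *
      (1 - (p (Set.Iic t)).toReal)) / Real.sqrt m := fun t => by positivity
  have key := fun t => aux_key μ p m hm X hX hlaw hindep t
  calc ∫ ω, (∫ t, G ω t) ∂μ
      ≤ ∫ t, Real.sqrt ((p (Set.Iic t)).toReal *
          (1 - (p (Set.Iic t)).toReal)) / Real.sqrt m :=
        aux_fubini_bound μ G hGuncurry hGnn _ hB hBnn hGint key
    _ = (1 / Real.sqrt m) *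
        ∫ t, Real.sqrt ((p (Set.Iic t)).toReal * (1 - (p (Set.Iic t)).toReal)) := by
        rw [integral_div]; ring
end

section
/- For any Borel probability measure p on ℝ with finite moment of order 2+δ for some δ > 0, one has ∫_ℝ sqrt(F_p(t)(1-F_p(t))) dt ≤ 1 + sqrt(2(1+δ)/δ) · (∫_ℝ |x|^{2+δ} p(dx))^{1/2}. -/
open MeasureTheory Real Set
open scoped ENNReal


-- neg change of variables for set lintegral
lemma aux_neg (h : ℝ → ℝ≥0∞) (hm : Measurable h) :
    ∫⁻ t in Set.Iio (-1:ℝ), h t = ∫⁻ s in Set.Ioi (1:ℝ), h (-s) := by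
  have h1 : (volume : Measure ℝ).restrict (Set.Iio (-1:ℝ))
      = Measure.map Neg.neg ((volume : Measure ℝ).restrict (Set.Ioi (1:ℝ))) := by
    have hpre : (Neg.neg ⁻¹' Set.Iio (-1:ℝ)) = Set.Ioi (1:ℝ) := by
      ext x
      simp only [Set.mem_preimage, Set.mem_Iio, Set.mem_Ioi]
      constructor <;> intro <;> linarith
    conv_lhs => rw [← Measure.map_neg_eq_self (volume : Measure ℝ)]
    rw [Measure.restrict_map measurable_neg measurableSet_Iio, hpre]
  rw [h1, lintegral_map hm measurable_neg]

-- I1 computation over Ioi 1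
lemma aux_I1 {δ : ℝ} (hδ : 0 < δ) :
    ∫⁻ t in Set.Ioi (1:ℝ), ENNReal.ofReal (|t| ^ (-(1+δ))) = ENNReal.ofReal (1/δ) := by
  have hcong : ∫⁻ t in Set.Ioi (1:ℝ), ENNReal.ofReal (|t| ^ (-(1+δ)))
      = ∫⁻ t in Set.Ioi (1:ℝ), ENNReal.ofReal (t ^ (-(1+δ))) := by
    apply setLIntegral_congr_fun measurableSet_Ioi
    intro t (ht : _ < t)
    dsimp only
    rw [abs_of_pos (lt_trans one_pos ht)]
  rw [hcong]
  have hint : IntegrableOn (fun t : ℝ => t ^ (-(1+δ))) (Set.Ioi (1:ℝ)) :=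
    integrableOn_Ioi_rpow_of_lt (by linarith) one_pos
  rw [← ofReal_integral_eq_lintegral_ofReal hint ?nn]
  case nn =>
    filter_upwards [self_mem_ae_restrict (measurableSet_Ioi : MeasurableSet (Set.Ioi (1:ℝ)))]
      with t ht
    exact Real.rpow_nonneg (le_trans zero_le_one (le_of_lt ht)) _
  rw [integral_Ioi_rpow_of_lt (by linarith) one_pos]
  congr 1
  rw [Real.one_rpow]
  field_simp
  rw [show (-(1+δ)+1 : ℝ) = -δ by ring, div_neg, neg_neg, div_self hδ.ne']

lemma aux_tail_lt (p : Measure ℝ) [IsProbabilityMeasure p] {δ : ℝ} (hδ : 0 < δ) :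
    ENNReal.ofReal (2+δ) * ∫⁻ t in Set.Ioi (0:ℝ), p {x | t < x} * ENNReal.ofReal (t ^ (1+δ))
      ≤ ∫⁻ x, ENNReal.ofReal (|x| ^ (2+δ)) ∂p := by
  have key := lintegral_rpow_eq_lintegral_meas_lt_mul p (f := fun x => max x 0)
    (Filter.Eventually.of_forall fun x => le_max_right _ _)
    ((measurable_id.max measurable_const).aemeasurable) (p := 2+δ) (by linarith)
  have hsets : ∫⁻ t in Set.Ioi (0:ℝ), p {a : ℝ | t < max a 0} * ENNReal.ofReal (t ^ (2+δ-1))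
      = ∫⁻ t in Set.Ioi (0:ℝ), p {x | t < x} * ENNReal.ofReal (t ^ (1+δ)) := by
    apply setLIntegral_congr_fun measurableSet_Ioi
    intro t (ht : _ < t)
    dsimp only
    have : {a : ℝ | t < max a 0} = {x | t < x} := by
      ext a
      simp only [Set.mem_setOf_eq, lt_max_iff]
      exact ⟨fun h => h.elim id (fun h0 => absurd ht (not_lt.2 h0.le)), Or.inl⟩
    rw [this, show (2+δ-1 : ℝ) = 1+δ by ring]
  rw [hsets] at key
  rw [← key]
  apply lintegral_mono fun x => ?_
  apply ENNReal.ofReal_le_ofReal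
  exact Real.rpow_le_rpow (le_max_right _ _) (max_le (le_abs_self x) (abs_nonneg x)) (by linarith)

lemma aux_tail_le (p : Measure ℝ) [IsProbabilityMeasure p] {δ : ℝ} (hδ : 0 < δ) :
    ENNReal.ofReal (2+δ) * ∫⁻ t in Set.Ioi (0:ℝ), p (Set.Iic (-t)) * ENNReal.ofReal (t ^ (1+δ))
      ≤ ∫⁻ x, ENNReal.ofReal (|x| ^ (2+δ)) ∂p := by
  have key := lintegral_rpow_eq_lintegral_meas_le_mul p (f := fun x => max (-x) 0)
    (Filter.Eventually.of_forall fun x => le_max_right _ _)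
    ((measurable_neg.max measurable_const).aemeasurable) (p := 2+δ) (by linarith)
  have hsets : ∫⁻ t in Set.Ioi (0:ℝ), p {a : ℝ | t ≤ max (-a) 0} * ENNReal.ofReal (t ^ (2+δ-1))
      = ∫⁻ t in Set.Ioi (0:ℝ), p (Set.Iic (-t)) * ENNReal.ofReal (t ^ (1+δ)) := by
    apply setLIntegral_congr_fun measurableSet_Ioi
    intro t (ht : _ < t)
    dsimp only
    have : {a : ℝ | t ≤ max (-a) 0} = Set.Iic (-t) := by
      ext a
      simp only [Set.mem_setOf_eq, le_max_iff, Set.mem_Iic]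
      constructor
      · rintro (h | h)
        · linarith
        · exact absurd ht (not_lt.2 h)
      · intro h; exact Or.inl (by linarith)
    rw [this, show (2+δ-1 : ℝ) = 1+δ by ring]
  rw [hsets] at key
  rw [← key]
  apply lintegral_mono fun x => ?_
  apply ENNReal.ofReal_le_ofReal
  exact Real.rpow_le_rpow (le_max_right _ _)
    (max_le (neg_le_abs x) (abs_nonneg x)) (by linarith)

/-- For a Borel probability measure `p` on `ℝ` with finite moment of order `2+δ`,
`∫ sqrt(F_p(t)(1-F_p(t))) dt ≤ 1 + sqrt(2(1+δ)/δ) (∫ |x|^{2+δ} dp)^{1/2}`. -/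
theorem stmt3 (p : Measure ℝ) [IsProbabilityMeasure p] (δ : ℝ) (hδ : 0 < δ)
    (hmom : Integrable (fun x => |x| ^ (2 + δ)) p) :
    ∫ t, Real.sqrt ((p (Set.Iic t)).toReal * (1 - (p (Set.Iic t)).toReal)) ≤
      1 + Real.sqrt (2 * (1 + δ) / δ) * (∫ x, |x| ^ (2 + δ) ∂p) ^ (1 / 2 : ℝ) := by
  set M := ∫ x, |x| ^ (2 + δ) ∂p with hMdef
  have hMnn : 0 ≤ M := integral_nonneg fun x => Real.rpow_nonneg (abs_nonneg x) _
  set F : ℝ → ℝ := fun t => (p (Set.Iic t)).toReal with hFdef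
  have hF0 : ∀ t, 0 ≤ F t := fun t => ENNReal.toReal_nonneg
  have hF1 : ∀ t, F t ≤ 1 := fun t => by
    have := prob_le_one (μ := p) (s := Set.Iic t)
    simpa [hFdef] using ENNReal.toReal_mono ENNReal.one_ne_top this
  have hFmono : Monotone F := fun s t h =>
    ENNReal.toReal_mono (measure_ne_top p _) (measure_mono (Set.Iic_subset_Iic.2 h))
  have hFmeas : Measurable F := hFmono.measurable
  set G : ℝ → ℝ := fun t => Real.sqrt (F t * (1 - F t)) with hGdef
  have hGmeas : Measurable G := (hFmeas.mul (measurable_const.sub hFmeas)).sqrt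
  have hGnn : ∀ t, 0 ≤ G t := fun t => Real.sqrt_nonneg _
  set m : ℝ → ℝ≥0∞ := fun t => min (p (Set.Iic t)) (p (Set.Ioi t)) with hmdef
  have hm_meas : Measurable m := by
    have hmono1 : Monotone fun t : ℝ => p (Set.Iic t) :=
      fun s t h => measure_mono (Set.Iic_subset_Iic.2 h)
    have hanti : Antitone fun t : ℝ => p (Set.Ioi t) :=
      fun s t h => measure_mono (Set.Ioi_subset_Ioi h)
    exact hmono1.measurable.min hanti.measurable
  -- pointwise bound
  have hpt : ∀ t, ENNReal.ofReal (G t) ≤ m t ^ (1/2 : ℝ) := by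
    intro t
    have hz : 0 ≤ F t * (1 - F t) := mul_nonneg (hF0 t) (by linarith [hF1 t])
    rw [hGdef]
    simp only [Real.sqrt_eq_rpow]
    rw [← ENNReal.ofReal_rpow_of_nonneg hz (by norm_num : (0:ℝ) ≤ 1/2)]
    apply ENNReal.rpow_le_rpow _ (by norm_num)
    rw [ENNReal.ofReal_mul (hF0 t)]
    have h1 : ENNReal.ofReal (F t) = p (Set.Iic t) :=
      ENNReal.ofReal_toReal (measure_ne_top p _)
    have h2 : ENNReal.ofReal (1 - F t) = p (Set.Ioi t) := by
      have hc : p (Set.Ioi t) = 1 - p (Set.Iic t) := by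
        rw [← Set.compl_Iic, measure_compl measurableSet_Iic (measure_ne_top p _),
          measure_univ]
      rw [ENNReal.ofReal_sub _ (hF0 t), ENNReal.ofReal_one, h1, hc]
    rw [h1, h2]
    refine le_min ?_ ?_
    · calc p (Set.Iic t) * p (Set.Ioi t) ≤ p (Set.Iic t) * 1 :=
          mul_le_mul_right prob_le_one _
        _ = p (Set.Iic t) := mul_one _
    · calc p (Set.Iic t) * p (Set.Ioi t) ≤ 1 * p (Set.Ioi t) :=
          mul_le_mul_left prob_le_one _
        _ = p (Set.Ioi t) := one_mul _
  -- pass to lintegral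
  rw [integral_eq_lintegral_of_nonneg_ae (Filter.Eventually.of_forall hGnn)
    hGmeas.aestronglyMeasurable]
  have hRHSnn : 0 ≤ 1 + Real.sqrt (2 * (1 + δ) / δ) * M ^ (1/2 : ℝ) := by
    have := Real.rpow_nonneg hMnn (1/2 : ℝ)
    have := Real.sqrt_nonneg (2 * (1 + δ) / δ)
    nlinarith
  suffices hL : (∫⁻ t, ENNReal.ofReal (G t)) ≤
      ENNReal.ofReal (1 + Real.sqrt (2 * (1 + δ) / δ) * M ^ (1/2 : ℝ)) by
    refine le_trans (ENNReal.toReal_mono ENNReal.ofReal_ne_top hL) ?_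
    rw [ENNReal.toReal_ofReal hRHSnn]
  -- split the integral
  set S := (Set.Icc (-1:ℝ) 1)ᶜ with hSdef
  have hS : MeasurableSet S := measurableSet_Icc.compl
  have hScompl : S = Set.Iio (-1) ∪ Set.Ioi 1 := by
    ext t
    simp only [hSdef, Set.mem_compl_iff, Set.mem_Icc, not_and_or, not_le, Set.mem_union,
      Set.mem_Iio, Set.mem_Ioi]
  rw [← lintegral_add_compl (fun t => ENNReal.ofReal (G t)) (measurableSet_Icc (a := (-1:ℝ)) (b := (1:ℝ)))]
  have part1 : (∫⁻ t in Set.Icc (-1:ℝ) 1, ENNReal.ofReal (G t)) ≤ ENNReal.ofReal 1 := by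
    have hGle : ∀ t, G t ≤ 1/2 := by
      intro t
      have h : F t * (1 - F t) ≤ (1/2)^2 := by nlinarith [hF0 t, hF1 t, sq_nonneg (2 * F t - 1)]
      calc G t ≤ Real.sqrt ((1/2)^2) := Real.sqrt_le_sqrt h
        _ = 1/2 := Real.sqrt_sq (by norm_num)
    calc (∫⁻ t in Set.Icc (-1:ℝ) 1, ENNReal.ofReal (G t))
        ≤ ∫⁻ _ in Set.Icc (-1:ℝ) 1, ENNReal.ofReal (1/2) :=
          lintegral_mono fun t => ENNReal.ofReal_le_ofReal (hGle t)
      _ = ENNReal.ofReal (1/2) * volume (Set.Icc (-1:ℝ) 1) := setLIntegral_const _ _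
      _ = ENNReal.ofReal (1/2) * ENNReal.ofReal 2 := by rw [Real.volume_Icc]; norm_num
      _ = ENNReal.ofReal 1 := by rw [← ENNReal.ofReal_mul (by norm_num)]; norm_num
  -- part 2
  set Mlin := ∫⁻ x, ENNReal.ofReal (|x| ^ (2+δ)) ∂p with hMlindef
  have hMl : Mlin = ENNReal.ofReal M := by
    rw [hMlindef, ← ofReal_integral_eq_lintegral_ofReal hmom
      (Filter.Eventually.of_forall fun x => Real.rpow_nonneg (abs_nonneg x) _)]
  have hinv : ∀ T : ℝ≥0∞, ENNReal.ofReal (2+δ) * T ≤ Mlin →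
      T ≤ ENNReal.ofReal ((2+δ)⁻¹) * Mlin := by
    intro T hT
    have ha0 : ENNReal.ofReal (2+δ) ≠ 0 := by
      simp only [ne_eq, ENNReal.ofReal_eq_zero, not_le]; linarith
    have hicalc : ENNReal.ofReal ((2+δ)⁻¹) = (ENNReal.ofReal (2+δ))⁻¹ :=
      ENNReal.ofReal_inv_of_pos (by linarith)
    rw [hicalc]
    calc T = (ENNReal.ofReal (2+δ))⁻¹ * (ENNReal.ofReal (2+δ) * T) := by
          rw [← mul_assoc, ENNReal.inv_mul_cancel ha0 ENNReal.ofReal_ne_top, one_mul]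
      _ ≤ _ := mul_le_mul_right hT _
  have hdisj : Disjoint (Set.Iio (-1:ℝ)) (Set.Ioi 1) := by
    rw [Set.disjoint_left]
    intro x hx hx'
    simp only [Set.mem_Iio] at hx
    simp only [Set.mem_Ioi] at hx'
    linarith
  set f : ℝ → ℝ≥0∞ := fun t => ENNReal.ofReal (|t| ^ (-(1+δ)/2)) with hfdef
  set g : ℝ → ℝ≥0∞ := fun t => ENNReal.ofReal (|t| ^ ((1+δ)/2)) * m t ^ (1/2:ℝ) with hgdef
  have habs : Measurable fun t : ℝ => |t| := continuous_abs.measurable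
  have hfm : Measurable f := (habs.pow measurable_const).ennreal_ofReal
  have hgm : Measurable g :=
    ((habs.pow measurable_const).ennreal_ofReal).mul (hm_meas.pow measurable_const)
  have hfg : ∀ t ∈ S, m t ^ (1/2:ℝ) = (f * g) t := by
    intro t ht
    have h1t : 1 < |t| := by
      rw [hScompl] at ht
      rcases ht with h | h
      · have h' : t < -1 := h
        rw [abs_of_neg (by linarith)]; linarith
      · have h' : (1:ℝ) < t := h
        rw [abs_of_pos (by linarith)]; exact h'
    have h0t : (0:ℝ) < |t| := lt_trans one_pos h1t
    simp only [hfdef, hgdef, Pi.mul_apply]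
    rw [← mul_assoc, ← ENNReal.ofReal_mul (Real.rpow_nonneg (abs_nonneg t) _),
      ← Real.rpow_add h0t, show (-(1+δ)/2 + (1+δ)/2 : ℝ) = 0 by ring, Real.rpow_zero,
      ENNReal.ofReal_one, one_mul]
  have step1 : (∫⁻ t in S, ENNReal.ofReal (G t)) ≤ ∫⁻ t in S, (f * g) t := by
    have hcong : (∫⁻ t in S, m t ^ (1/2:ℝ)) = ∫⁻ t in S, (f * g) t :=
      setLIntegral_congr_fun hS (by intro t ht; exact hfg t ht)
    calc (∫⁻ t in S, ENNReal.ofReal (G t)) ≤ ∫⁻ t in S, m t ^ (1/2:ℝ) :=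
          lintegral_mono fun t => hpt t
      _ = _ := hcong
  have hconj : Real.HolderConjugate 2 2 := Real.HolderConjugate.two_two
  have holder := ENNReal.lintegral_mul_le_Lp_mul_Lq (volume.restrict S) hconj
    hfm.aemeasurable hgm.aemeasurable
  -- compute A
  have hA : (∫⁻ t in S, f t ^ (2:ℝ)) = ENNReal.ofReal (2/δ) := by
    have hpt2 : ∀ t : ℝ, f t ^ (2:ℝ) = ENNReal.ofReal (|t| ^ (-(1+δ))) := by
      intro t
      rw [hfdef]
      rw [ENNReal.ofReal_rpow_of_nonneg (Real.rpow_nonneg (abs_nonneg t) _)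
        (by norm_num : (0:ℝ) ≤ 2)]
      congr 1
      rw [← Real.rpow_mul (abs_nonneg t), show (-(1+δ)/2*2 : ℝ) = -(1+δ) by ring]
    simp_rw [hpt2]
    rw [hSdef]
    have : (Set.Icc (-1:ℝ) 1)ᶜ = Set.Iio (-1) ∪ Set.Ioi 1 := by rw [← hSdef]; exact hScompl
    rw [this, lintegral_union measurableSet_Ioi hdisj]
    have hneg : (∫⁻ t in Set.Iio (-1:ℝ), ENNReal.ofReal (|t| ^ (-(1+δ))))
        = ∫⁻ s in Set.Ioi (1:ℝ), ENNReal.ofReal (|s| ^ (-(1+δ))) := by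
      rw [aux_neg _ ((habs.pow measurable_const).ennreal_ofReal)]
      simp_rw [abs_neg]
    rw [hneg, aux_I1 hδ, ← ENNReal.ofReal_add (by positivity) (by positivity)]
    congr 1
    ring
  -- bound B
  have hptg : ∀ t : ℝ, g t ^ (2:ℝ) = ENNReal.ofReal (|t| ^ (1+δ)) * m t := by
    intro t
    rw [hgdef, ENNReal.mul_rpow_of_nonneg _ _ (by norm_num : (0:ℝ) ≤ 2)]
    congr 1
    · rw [ENNReal.ofReal_rpow_of_nonneg (Real.rpow_nonneg (abs_nonneg t) _)
        (by norm_num : (0:ℝ) ≤ 2)]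
      congr 1
      rw [← Real.rpow_mul (abs_nonneg t), show ((1+δ)/2*2 : ℝ) = 1+δ by ring]
    · rw [← ENNReal.rpow_mul, show (1/2*2 : ℝ) = 1 by ring, ENNReal.rpow_one]
  have hB : (∫⁻ t in S, g t ^ (2:ℝ)) ≤
      ENNReal.ofReal ((2+δ)⁻¹) * Mlin + ENNReal.ofReal ((2+δ)⁻¹) * Mlin := by
    have hrw : (∫⁻ t in S, g t ^ (2:ℝ))
        = (∫⁻ t in Set.Iio (-1:ℝ), ENNReal.ofReal (|t| ^ (1+δ)) * m t)
          + ∫⁻ t in Set.Ioi (1:ℝ), ENNReal.ofReal (|t| ^ (1+δ)) * m t := by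
      simp_rw [hptg]
      rw [hSdef]
      have : (Set.Icc (-1:ℝ) 1)ᶜ = Set.Iio (-1) ∪ Set.Ioi 1 := by rw [← hSdef]; exact hScompl
      rw [this, lintegral_union measurableSet_Ioi hdisj]
    rw [hrw]
    have hmesLHS : Measurable fun t : ℝ => ENNReal.ofReal (|t| ^ (1+δ)) * m t :=
      ((habs.pow measurable_const).ennreal_ofReal).mul hm_meas
    -- right part
    have hright : (∫⁻ t in Set.Ioi (1:ℝ), ENNReal.ofReal (|t| ^ (1+δ)) * m t)
        ≤ ENNReal.ofReal ((2+δ)⁻¹) * Mlin := by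
      apply hinv
      refine le_trans ?_ (aux_tail_lt p hδ)
      apply mul_le_mul_right
      calc (∫⁻ t in Set.Ioi (1:ℝ), ENNReal.ofReal (|t| ^ (1+δ)) * m t)
          ≤ ∫⁻ t in Set.Ioi (1:ℝ), p {x | t < x} * ENNReal.ofReal (t ^ (1+δ)) := by
            apply setLIntegral_mono_ae' measurableSet_Ioi
            filter_upwards with t
            intro h1t
            have h1t' : (1:ℝ) < t := h1t
            rw [abs_of_pos (by linarith), mul_comm]
            exact mul_le_mul_left (min_le_right _ _) _
        _ ≤ ∫⁻ t in Set.Ioi (0:ℝ), p {x | t < x} * ENNReal.ofReal (t ^ (1+δ)) :=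
            lintegral_mono_set (Set.Ioi_subset_Ioi (by norm_num))
    -- left part
    have hleft : (∫⁻ t in Set.Iio (-1:ℝ), ENNReal.ofReal (|t| ^ (1+δ)) * m t)
        ≤ ENNReal.ofReal ((2+δ)⁻¹) * Mlin := by
      apply hinv
      refine le_trans ?_ (aux_tail_le p hδ)
      apply mul_le_mul_right
      rw [aux_neg _ hmesLHS]
      calc (∫⁻ s in Set.Ioi (1:ℝ), ENNReal.ofReal (|(-s)| ^ (1+δ)) * m (-s))
          ≤ ∫⁻ s in Set.Ioi (1:ℝ), p (Set.Iic (-s)) * ENNReal.ofReal (s ^ (1+δ)) := by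
            apply setLIntegral_mono_ae' measurableSet_Ioi
            filter_upwards with s
            intro h1s
            have h1s' : (1:ℝ) < s := h1s
            rw [abs_neg, abs_of_pos (by linarith), mul_comm]
            exact mul_le_mul_left (min_le_left _ _) _
        _ ≤ ∫⁻ s in Set.Ioi (0:ℝ), p (Set.Iic (-s)) * ENNReal.ofReal (s ^ (1+δ)) :=
            lintegral_mono_set (Set.Ioi_subset_Ioi (by norm_num))
    exact add_le_add hleft hright
  -- combine
  have part2 : (∫⁻ t in S, ENNReal.ofReal (G t)) ≤
      ENNReal.ofReal (Real.sqrt (2 * (1 + δ) / δ) * M ^ (1/2:ℝ)) := by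
    have hBM : (∫⁻ t in S, g t ^ (2:ℝ)) ≤ ENNReal.ofReal ((2+δ)⁻¹ * (2*M)) := by
      refine le_trans hB ?_
      rw [hMl, ← ENNReal.ofReal_mul (by positivity), show ((2+δ)⁻¹ * (2*M) : ℝ)
        = (2+δ)⁻¹*M + (2+δ)⁻¹*M by ring,
        ENNReal.ofReal_add (by positivity) (by positivity)]
    calc (∫⁻ t in S, ENNReal.ofReal (G t)) ≤ ∫⁻ t in S, (f * g) t := step1
      _ ≤ (∫⁻ t in S, f t ^ (2:ℝ)) ^ (1/2:ℝ) * (∫⁻ t in S, g t ^ (2:ℝ)) ^ (1/2:ℝ) := by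
          simpa using holder
      _ ≤ ENNReal.ofReal (2/δ) ^ (1/2:ℝ) * ENNReal.ofReal ((2+δ)⁻¹ * (2*M)) ^ (1/2:ℝ) := by
          rw [hA]
          exact mul_le_mul_right (ENNReal.rpow_le_rpow hBM (by norm_num)) _
      _ = ENNReal.ofReal ((2/δ) ^ (1/2:ℝ) * ((2+δ)⁻¹ * (2*M)) ^ (1/2:ℝ)) := by
          rw [ENNReal.ofReal_rpow_of_nonneg (by positivity) (by norm_num),
            ENNReal.ofReal_rpow_of_nonneg (by positivity) (by norm_num),
            ← ENNReal.ofReal_mul (by positivity)]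
      _ ≤ ENNReal.ofReal (Real.sqrt (2 * (1 + δ) / δ) * M ^ (1/2:ℝ)) := by
          apply ENNReal.ofReal_le_ofReal
          rw [← Real.sqrt_eq_rpow, ← Real.sqrt_eq_rpow, ← Real.sqrt_eq_rpow,
            ← Real.sqrt_mul (by positivity), ← Real.sqrt_mul (by positivity)]
          apply Real.sqrt_le_sqrt
          rw [show (2/δ * ((2+δ)⁻¹ * (2*M)) : ℝ) = (4 / (δ*(2+δ))) * M by field_simp; ring]
          apply mul_le_mul_of_nonneg_right _ hMnn
          rw [div_le_div_iff₀ (by positivity) hδ]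
          nlinarith [sq_nonneg δ, hδ.le, mul_nonneg (mul_nonneg hδ.le hδ.le) hδ.le]
  calc (∫⁻ t in Set.Icc (-1:ℝ) 1, ENNReal.ofReal (G t)) + ∫⁻ t in S, ENNReal.ofReal (G t)
      ≤ ENNReal.ofReal 1 + ENNReal.ofReal (Real.sqrt (2 * (1 + δ) / δ) * M ^ (1/2:ℝ)) :=
        add_le_add part1 part2
    _ = ENNReal.ofReal (1 + Real.sqrt (2 * (1 + δ) / δ) * M ^ (1/2:ℝ)) := by
        rw [← ENNReal.ofReal_add (by norm_num) (by positivity)]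
end

section
/- Let (ξ_k) be an exchangeable sequence directed by a random probability measure p̃ on ℝ (i.e., conditionally i.i.d. with law p̃), and let f: ℝ → ℝ be measurable with E[f(ξ_1)^2] < ∞. Then the Wasserstein distance of order one between the law of (1/N)∑_{i=1}^N f(ξ_i) and the law of ∫ f dp̃ satisfies w_1((1/N)∑_{i=1}^N f(ξ_i), ∫ f dp̃) ≤ (1/√N)(E|f(ξ_1) - ∫ f dp̃|^2)^{1/2} ≤ (2/√N)·sqrt(E[f(ξ_1)^2]). -/
open MeasureTheory ProbabilityTheory Real
open scoped ENNReal NNReal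

/-- `ξ` is, conditionally on the random probability measure `p̃`, an i.i.d. sequence with
common law `p̃` (i.e. an exchangeable sequence directed by `p̃`). -/
def CondIID {Ω : Type*} [MeasurableSpace Ω] {X : Type*} [MeasurableSpace X]
    (μ : Measure Ω) (ξ : ℕ → Ω → X) (ptilde : Ω → Measure X) : Prop :=
  (∀ ω, IsProbabilityMeasure (ptilde ω)) ∧ Measurable ptilde ∧ (∀ i, Measurable (ξ i)) ∧
  ∀ (n : ℕ) (A : Fin n → Set X) (B : Set (Measure X)),
    (∀ i, MeasurableSet (A i)) → MeasurableSet B →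
    μ ({ω | ∀ i, ξ (i : ℕ) ω ∈ A i} ∩ ptilde ⁻¹' B) =
      ∫⁻ ω in ptilde ⁻¹' B, ∏ i, ptilde ω (A i) ∂μ

section Rect
variable {Ω : Type*} [MeasurableSpace Ω] {μ : Measure Ω}
  {ξ : ℕ → Ω → ℝ} {ptilde : Ω → Measure ℝ}

lemma rect1 (h : CondIID μ ξ ptilde) (i : ℕ) {A : Set ℝ} (hA : MeasurableSet A) {B : Set (Measure ℝ)}
    (hB : MeasurableSet B) :
    μ (ξ i ⁻¹' A ∩ ptilde ⁻¹' B) = ∫⁻ ω in ptilde ⁻¹' B, ptilde ω A ∂μ := by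
  classical
  set n := i + 1 with hn
  have hi : i < n := Nat.lt_succ_self i
  set A' : Fin n → Set ℝ := fun k => if (k : ℕ) = i then A else Set.univ with hA'
  have hmeas : ∀ k, MeasurableSet (A' k) := by
    intro k; simp only [hA']; split_ifs <;> simp [hA]
  have hset : {ω | ∀ k : Fin n, ξ (k : ℕ) ω ∈ A' k} = ξ i ⁻¹' A := by
    ext ω
    constructor
    · intro hk
      have := hk ⟨i, hi⟩
      simpa [hA'] using this
    · intro hω k
      simp only [hA']
      split_ifs with hk
      · rw [hk]; exact hω
      · trivial
  have hprod : ∀ ω, (∏ k, ptilde ω (A' k)) = ptilde ω A := by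
    intro ω
    haveI := h.1 ω
    rw [Finset.prod_eq_single (⟨i, hi⟩ : Fin n)]
    · simp [hA']
    · intro k _ hk
      have : (k : ℕ) ≠ i := fun hc => hk (Fin.ext hc)
      simp [hA', this]
    · simp
  have := h.2.2.2 n A' B hmeas hB
  rw [hset] at this
  rw [this]
  exact setLIntegral_congr_fun (h.2.1 hB) (fun ω _ => hprod ω)

lemma rect2 (h : CondIID μ ξ ptilde) {i j : ℕ} (hij : i ≠ j) {A₁ A₂ : Set ℝ} (hA₁ : MeasurableSet A₁)
    (hA₂ : MeasurableSet A₂) {B : Set (Measure ℝ)} (hB : MeasurableSet B) :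
    μ (ξ i ⁻¹' A₁ ∩ ξ j ⁻¹' A₂ ∩ ptilde ⁻¹' B) =
      ∫⁻ ω in ptilde ⁻¹' B, ptilde ω A₁ * ptilde ω A₂ ∂μ := by
  classical
  set n := max i j + 1 with hn
  have hi : i < n := Nat.lt_succ_of_le (le_max_left _ _)
  have hj : j < n := Nat.lt_succ_of_le (le_max_right _ _)
  set A' : Fin n → Set ℝ := fun k =>
    if (k : ℕ) = i then A₁ else if (k : ℕ) = j then A₂ else Set.univ with hA'
  have hmeas : ∀ k, MeasurableSet (A' k) := by
    intro k; simp only [hA']; split_ifs <;> simp [hA₁, hA₂]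
  have hset : {ω | ∀ k : Fin n, ξ (k : ℕ) ω ∈ A' k} = ξ i ⁻¹' A₁ ∩ ξ j ⁻¹' A₂ := by
    ext ω
    constructor
    · intro hk
      have h1 := hk ⟨i, hi⟩
      have h2 := hk ⟨j, hj⟩
      refine ⟨by simpa [hA'] using h1, by simpa [hA', hij.symm] using h2⟩
    · rintro ⟨h1, h2⟩ k
      simp only [hA']
      split_ifs with hk hk'
      · rw [hk]; exact h1
      · rw [hk']; exact h2
      · trivial
  have hI : (⟨i, hi⟩ : Fin n) ≠ ⟨j, hj⟩ := fun hc => hij (by injection hc)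
  have hprod : ∀ ω, (∏ k, ptilde ω (A' k)) = ptilde ω A₁ * ptilde ω A₂ := by
    intro ω
    haveI := h.1 ω
    rw [← Finset.prod_subset (Finset.subset_univ ({⟨i, hi⟩, ⟨j, hj⟩} : Finset (Fin n)))
      (by
        intro k _ hk
        simp only [Finset.mem_insert, Finset.mem_singleton] at hk
        push_neg at hk
        have h1 : (k : ℕ) ≠ i := fun hc => hk.1 (Fin.ext hc)
        have h2 : (k : ℕ) ≠ j := fun hc => hk.2 (Fin.ext hc)
        simp [hA', h1, h2])]
    rw [Finset.prod_pair hI]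
    simp [hA', hij.symm]
  have := h.2.2.2 n A' B hmeas hB
  rw [hset] at this
  rw [this]
  exact setLIntegral_congr_fun (h.2.1 hB) (fun ω _ => hprod ω)

end Rect

abbrev PM := {p : MeasureTheory.Measure ℝ // MeasureTheory.IsProbabilityMeasure p}

noncomputable def coeK : Kernel PM ℝ := ⟨fun q => q.1, measurable_subtype_coe⟩

instance : IsMarkovKernel coeK := ⟨fun q => q.2⟩

lemma coeK_apply (q : PM) : coeK q = q.1 := rfl

lemma measurable_integral_PM (f : ℝ → ℝ) (hf : Measurable f) :
    Measurable (fun q : PM => ∫ x, f x ∂q.1) := by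
  have h1 : StronglyMeasurable (Function.uncurry fun (_ : PM) (x : ℝ) => f x) :=
    (hf.comp measurable_snd).stronglyMeasurable
  exact (h1.integral_kernel_prod_right (κ := coeK)).measurable

section JL
variable {Ω : Type*} [MeasurableSpace Ω] {μ : Measure Ω} [IsProbabilityMeasure μ]
  {ξ : ℕ → Ω → ℝ} {ptilde : Ω → Measure ℝ}

/-- The directing measure as a map to probability measures. -/
def phat (h : CondIID μ ξ ptilde) : Ω → PM := fun ω => ⟨ptilde ω, h.1 ω⟩

lemma phat_meas (h : CondIID μ ξ ptilde) : Measurable (phat h) :=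
  Measurable.subtype_mk h.2.1

lemma phat_preimage (h : CondIID μ ξ ptilde) {B : Set PM} (hB : MeasurableSet B) :
    ∃ B₀ : Set (Measure ℝ), MeasurableSet B₀ ∧ phat h ⁻¹' B = ptilde ⁻¹' B₀ := by
  obtain ⟨B₀, hB₀, hpre⟩ := MeasurableSpace.measurableSet_comap.mp hB
  refine ⟨B₀, hB₀, ?_⟩
  ext ω
  simp only [Set.mem_preimage, ← hpre]
  rfl

lemma JL1 (h : CondIID μ ξ ptilde) (i : ℕ) :
    μ.map (fun ω => (phat h ω, ξ i ω)) = (μ.map (phat h)) ⊗ₘ coeK := by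
  have hphat := phat_meas h
  have hξ := h.2.2.1
  haveI : IsProbabilityMeasure (μ.map (phat h)) := Measure.isProbabilityMeasure_map hphat.aemeasurable
  have hT : Measurable fun ω => (phat h ω, ξ i ω) := hphat.prodMk (hξ i)
  refine ext_of_generate_finite _ generateFrom_prod.symm isPiSystem_prod ?_ ?_
  · rintro _ ⟨B, hB, A, hA, rfl⟩
    simp only [Set.mem_setOf_eq] at hB hA
    rw [Measure.map_apply hT (hB.prod hA), Measure.compProd_apply_prod hB hA]
    simp only [coeK_apply]
    rw [setLIntegral_map hB
      (show Measurable fun q : PM => q.1 A from (Measure.measurable_coe hA).comp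
        measurable_subtype_coe) hphat]
    obtain ⟨B₀, hB₀, hpre⟩ := phat_preimage h hB
    rw [Set.mk_preimage_prod, hpre, Set.inter_comm]
    exact rect1 h i hA hB₀
  · simp [Measure.map_apply hT MeasurableSet.univ]

lemma JL2 (h : CondIID μ ξ ptilde) {i j : ℕ} (hij : i ≠ j) :
    μ.map (fun ω => (phat h ω, (ξ i ω, ξ j ω))) =
      (μ.map (phat h)) ⊗ₘ (coeK ×ₖ coeK) := by
  have hphat := phat_meas h
  have hξ := h.2.2.1
  haveI : IsProbabilityMeasure (μ.map (phat h)) := Measure.isProbabilityMeasure_map hphat.aemeasurable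
  have hT : Measurable fun ω => (phat h ω, (ξ i ω, ξ j ω)) :=
    hphat.prodMk ((hξ i).prodMk (hξ j))
  have hgen : (inferInstance : MeasurableSpace (PM × (ℝ × ℝ))) =
      MeasurableSpace.generateFrom (Set.image2 (· ×ˢ ·) {s : Set PM | MeasurableSet s}
        (Set.image2 (· ×ˢ ·) {s : Set ℝ | MeasurableSet s} {t : Set ℝ | MeasurableSet t})) :=
    (generateFrom_eq_prod MeasurableSpace.generateFrom_measurableSet generateFrom_prod
      isCountablySpanning_measurableSet
      (isCountablySpanning_measurableSet.prod isCountablySpanning_measurableSet)).symm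
  refine ext_of_generate_finite _ hgen
    (MeasurableSpace.isPiSystem_measurableSet.prod isPiSystem_prod) ?_ ?_
  · rintro _ ⟨B, hB, _, ⟨A₁, hA₁, A₂, hA₂, rfl⟩, rfl⟩
    simp only [Set.mem_setOf_eq] at hB hA₁ hA₂
    rw [Measure.map_apply hT (hB.prod (hA₁.prod hA₂)),
      Measure.compProd_apply_prod hB (hA₁.prod hA₂)]
    have hK : ∀ q : PM, (coeK ×ₖ coeK) q (A₁ ×ˢ A₂) = q.1 A₁ * q.1 A₂ := by
      intro q
      haveI := q.2
      rw [Kernel.prod_apply, coeK_apply, Measure.prod_prod]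
    rw [setLIntegral_congr_fun hB (fun q _ => hK q),
      setLIntegral_map hB
      (show Measurable fun q : PM => q.1 A₁ * q.1 A₂ from
        (((Measure.measurable_coe hA₁).comp measurable_subtype_coe).mul
        ((Measure.measurable_coe hA₂).comp measurable_subtype_coe))) hphat]
    obtain ⟨B₀, hB₀, hpre⟩ := phat_preimage h hB
    rw [Set.mk_preimage_prod, Set.mk_preimage_prod, hpre, Set.inter_comm]
    exact rect2 h hij hA₁ hA₂ hB₀
  · simp [Measure.map_apply hT MeasurableSet.univ]

end JL
section Transfer
variable {Ω : Type*} [MeasurableSpace Ω] {μ : Measure Ω} [IsProbabilityMeasure μ]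
  {ξ : ℕ → Ω → ℝ} {ptilde : Ω → Measure ℝ}

lemma lint_single (h : CondIID μ ξ ptilde) (i : ℕ) {G : PM × ℝ → ℝ≥0∞} (hG : Measurable G) :
    ∫⁻ ω, G (phat h ω, ξ i ω) ∂μ = ∫⁻ q, ∫⁻ x, G (q, x) ∂q.1 ∂(μ.map (phat h)) := by
  rw [← lintegral_map hG ((phat_meas h).prodMk (h.2.2.1 i)), JL1 h i,
    Measure.lintegral_compProd hG]
  rfl

lemma int_single (h : CondIID μ ξ ptilde) (i : ℕ) {G : PM × ℝ → ℝ}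
    (hGm : StronglyMeasurable G) (hGi : Integrable (fun ω => G (phat h ω, ξ i ω)) μ) :
    ∫ ω, G (phat h ω, ξ i ω) ∂μ = ∫ q, ∫ x, G (q, x) ∂q.1 ∂(μ.map (phat h)) := by
  have hT : Measurable fun ω => (phat h ω, ξ i ω) := (phat_meas h).prodMk (h.2.2.1 i)
  have h1 : Integrable G ((μ.map (phat h)) ⊗ₘ coeK) := by
    rw [← JL1 h i]
    exact (integrable_map_measure hGm.aestronglyMeasurable hT.aemeasurable).mpr hGi
  calc ∫ ω, G (phat h ω, ξ i ω) ∂μ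
      = ∫ z, G z ∂(μ.map fun ω => (phat h ω, ξ i ω)) :=
        (integral_map hT.aemeasurable hGm.aestronglyMeasurable).symm
    _ = ∫ z, G z ∂((μ.map (phat h)) ⊗ₘ coeK) := by rw [JL1 h i]
    _ = ∫ q, ∫ x, G (q, x) ∂q.1 ∂(μ.map (phat h)) := Measure.integral_compProd h1

lemma int_pair (h : CondIID μ ξ ptilde) {i j : ℕ} (hij : i ≠ j) {G : PM × (ℝ × ℝ) → ℝ}
    (hGm : StronglyMeasurable G)
    (hGi : Integrable (fun ω => G (phat h ω, (ξ i ω, ξ j ω))) μ) :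
    ∫ ω, G (phat h ω, (ξ i ω, ξ j ω)) ∂μ =
      ∫ q, ∫ z, G (q, z) ∂(q.1.prod q.1) ∂(μ.map (phat h)) := by
  have hT : Measurable fun ω => (phat h ω, (ξ i ω, ξ j ω)) :=
    (phat_meas h).prodMk ((h.2.2.1 i).prodMk (h.2.2.1 j))
  have h1 : Integrable G ((μ.map (phat h)) ⊗ₘ (coeK ×ₖ coeK)) := by
    rw [← JL2 h hij]
    exact (integrable_map_measure hGm.aestronglyMeasurable hT.aemeasurable).mpr hGi
  have hker : ∀ q : PM, (coeK ×ₖ coeK) q = q.1.prod q.1 := by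
    intro q
    haveI := q.2
    rw [Kernel.prod_apply, coeK_apply]
  calc ∫ ω, G (phat h ω, (ξ i ω, ξ j ω)) ∂μ
      = ∫ z, G z ∂(μ.map fun ω => (phat h ω, (ξ i ω, ξ j ω))) :=
        (integral_map hT.aemeasurable hGm.aestronglyMeasurable).symm
    _ = ∫ z, G z ∂((μ.map (phat h)) ⊗ₘ (coeK ×ₖ coeK)) := by rw [JL2 h hij]
    _ = ∫ q, ∫ z, G (q, z) ∂((coeK ×ₖ coeK) q) ∂(μ.map (phat h)) :=
        Measure.integral_compProd h1
    _ = ∫ q, ∫ z, G (q, z) ∂(q.1.prod q.1) ∂(μ.map (phat h)) := by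
        simp only [hker]

end Transfer

section Helpers
variable {α : Type*} [MeasurableSpace α] {μ : Measure α}

lemma mul_L2_int {u v : α → ℝ} (hu : MemLp u 2 μ) (hv : MemLp v 2 μ) :
    Integrable (fun ω => u ω * v ω) μ := by
  have hu2 := hu.integrable_sq
  have hv2 := hv.integrable_sq
  refine Integrable.mono' ((hu2.add hv2).div_const 2)
    (hu.aestronglyMeasurable.mul hv.aestronglyMeasurable) ?_
  refine Filter.Eventually.of_forall fun ω => ?_
  rw [Real.norm_eq_abs, abs_mul]
  simp only [Pi.add_apply]
  nlinarith [sq_nonneg (|u ω| - |v ω|), sq_abs (u ω), sq_abs (v ω),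
    abs_nonneg (u ω), abs_nonneg (v ω)]

lemma abs_int_le_sqrt [IsProbabilityMeasure μ] {u : α → ℝ} (hu : MemLp u 2 μ) :
    ∫ a, |u a| ∂μ ≤ Real.sqrt (∫ a, u a ^ 2 ∂μ) := by
  have habs : MemLp (fun a => |u a|) 2 μ := by
    simpa [Real.norm_eq_abs] using hu.norm
  have h1 := variance_nonneg (fun a => |u a|) μ
  rw [variance_eq_sub habs] at h1
  have h2 : (∫ a, |u a| ∂μ) ^ 2 ≤ ∫ a, u a ^ 2 ∂μ := by
    simp only [Pi.pow_apply, sq_abs] at h1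
    linarith
  have h3 : 0 ≤ ∫ a, |u a| ∂μ := integral_nonneg fun a => abs_nonneg _
  have h4 : 0 ≤ ∫ a, u a ^ 2 ∂μ := integral_nonneg fun a => sq_nonneg _
  exact (Real.le_sqrt h3 h4).mpr h2

end Helpers

/-- Wasserstein distance of order one between laws on `ℝ`, as an infimum over couplings. -/
noncomputable def w1 (P Q : Measure ℝ) : ℝ :=
  sInf {x | ∃ γ : Measure (ℝ × ℝ), IsProbabilityMeasure γ ∧
    γ.map Prod.fst = P ∧ γ.map Prod.snd = Q ∧ x = ∫ z, |z.1 - z.2| ∂γ}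

/-- For an exchangeable sequence directed by `p̃` and `f` with `E f(ξ₁)² < ∞`,
`w₁((1/N)∑ f(ξᵢ), ∫ f dp̃) ≤ N^{-1/2} (E|f(ξ₁) - ∫ f dp̃|²)^{1/2}
  ≤ 2 N^{-1/2} (E f(ξ₁)²)^{1/2}`. -/
theorem stmt10 {Ω : Type*} [MeasurableSpace Ω] (μ : Measure Ω) [IsProbabilityMeasure μ]
    (ξ : ℕ → Ω → ℝ) (ptilde : Ω → Measure ℝ) (h : CondIID μ ξ ptilde)
    (f : ℝ → ℝ) (hf : Measurable f) (hf2 : Integrable (fun ω => f (ξ 0 ω) ^ 2) μ)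
    (N : ℕ) (hN : 0 < N) :
    w1 (μ.map fun ω => (1 / N : ℝ) * ∑ i ∈ Finset.range N, f (ξ i ω))
        (μ.map fun ω => ∫ x, f x ∂ptilde ω) ≤
      (1 / Real.sqrt N) * (∫ ω, |f (ξ 0 ω) - ∫ x, f x ∂ptilde ω| ^ 2 ∂μ) ^ (1/2 : ℝ) ∧
    (1 / Real.sqrt N) * (∫ ω, |f (ξ 0 ω) - ∫ x, f x ∂ptilde ω| ^ 2 ∂μ) ^ (1/2 : ℝ) ≤
      (2 / Real.sqrt N) * Real.sqrt (∫ ω, f (ξ 0 ω) ^ 2 ∂μ) := by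
  classical
  have hphat := phat_meas h
  have hξ := h.2.2.1
  set Q : Measure PM := μ.map (phat h) with hQdef
  haveI : IsProbabilityMeasure Q := Measure.isProbabilityMeasure_map hphat.aemeasurable
  set M : PM → ℝ := fun q => ∫ x, f x ∂q.1 with hMdef
  have hM : Measurable M := measurable_integral_PM f hf
  set m : Ω → ℝ := fun ω => ∫ x, f x ∂ptilde ω with hmdef
  have hm : Measurable m := hM.comp hphat
  have hX : ∀ i, Measurable fun ω => f (ξ i ω) := fun i => hf.comp (hξ i)
  -- lintegral of ‖f‖² transfers
  have hGnn : Measurable fun z : PM × ℝ => (‖f z.2‖₊ : ℝ≥0∞) ^ 2 :=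
    ((hf.comp measurable_snd).nnnorm.coe_nnreal_ennreal).pow_const 2
  have hnn : ∀ i, ∫⁻ ω, (‖f (ξ i ω)‖₊ : ℝ≥0∞) ^ 2 ∂μ =
      ∫⁻ q, ∫⁻ x, (‖f x‖₊ : ℝ≥0∞) ^ 2 ∂q.1 ∂Q := fun i => lint_single h i hGnn
  have hfin0 : (∫⁻ ω, (‖f (ξ 0 ω)‖₊ : ℝ≥0∞) ^ 2 ∂μ) < ⊤ := by
    have h0 := hf2.hasFiniteIntegral
    simp only [HasFiniteIntegral, enorm_pow, nnnorm_pow, ENNReal.coe_pow] at h0 ⊢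
    exact h0
  have hXsq_int : ∀ i, Integrable (fun ω => f (ξ i ω) ^ 2) μ := by
    intro i
    refine ⟨((hX i).pow_const 2).aestronglyMeasurable, ?_⟩
    have : ∫⁻ ω, (‖f (ξ i ω)‖₊ : ℝ≥0∞) ^ 2 ∂μ < ⊤ := by
      rw [hnn i, ← hnn 0]; exact hfin0
    simpa only [HasFiniteIntegral, enorm_pow, enorm_eq_nnnorm, nnnorm_pow, ENNReal.coe_pow] using this
  have hXL2 : ∀ i, MemLp (fun ω => f (ξ i ω)) 2 μ := fun i =>
    (memLp_two_iff_integrable_sq (hX i).aestronglyMeasurable).mpr (hXsq_int i)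
  -- the function H q = ∫⁻ ‖f‖² dq
  set H : PM → ℝ≥0∞ := fun q => ∫⁻ x, (‖f x‖₊ : ℝ≥0∞) ^ 2 ∂q.1 with hHdef
  have hH : Measurable H :=
    (Measurable.lintegral_kernel_prod_right' (κ := coeK) (f := fun z : PM × ℝ =>
      (‖f z.2‖₊ : ℝ≥0∞) ^ 2) hGnn : Measurable fun q : PM => ∫⁻ x, (‖f x‖₊ : ℝ≥0∞) ^ 2 ∂coeK q)
  have hswap : ∫⁻ ω, H (phat h ω) ∂μ = ∫⁻ ω, (‖f (ξ 0 ω)‖₊ : ℝ≥0∞) ^ 2 ∂μ := by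
    rw [← lintegral_map hH hphat, ← hQdef, hnn 0]
  have hfinae : ∀ᵐ ω ∂μ, H (phat h ω) < ⊤ :=
    ae_lt_top (hH.comp hphat) (by rw [hswap]; exact hfin0.ne)
  have hfL2ae : ∀ᵐ ω ∂μ, MemLp f 2 (ptilde ω) := by
    filter_upwards [hfinae] with ω hω
    haveI := h.1 ω
    refine (memLp_two_iff_integrable_sq hf.aestronglyMeasurable).mpr ?_
    refine ⟨(hf.pow_const 2).aestronglyMeasurable, ?_⟩
    simp only [HasFiniteIntegral, enorm_pow, enorm_eq_nnnorm, nnnorm_pow, ENNReal.coe_pow]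
    exact hω
  -- g2c = conditional second moment
  set g2c : Ω → ℝ := fun ω => ∫ x, f x ^ 2 ∂ptilde ω with hg2cdef
  have hg2c : Measurable g2c :=
    (measurable_integral_PM (fun x => f x ^ 2) (hf.pow_const 2)).comp hphat
  have hg2c_int : Integrable g2c μ := by
    refine ⟨hg2c.aestronglyMeasurable, ?_⟩
    rw [HasFiniteIntegral]
    have hb : ∀ ω, (‖g2c ω‖₊ : ℝ≥0∞) ≤ H (phat h ω) := by
      intro ω
      refine (enorm_integral_le_lintegral_enorm _).trans_eq ?_
      simp only [hHdef, enorm_pow, nnnorm_pow, ENNReal.coe_pow]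
      rfl
    exact lt_of_le_of_lt (lintegral_mono hb) (by rw [hswap]; exact hfin0)
  -- E0 and C
  set E0 : ℝ := ∫ ω, f (ξ 0 ω) ^ 2 ∂μ with hE0def
  set C : ℝ := ∫ ω, m ω ^ 2 ∂μ with hCdef
  -- conditional Cauchy-Schwarz : m² ≤ g2c a.e.
  have hm2_le : ∀ᵐ ω ∂μ, m ω ^ 2 ≤ g2c ω := by
    filter_upwards [hfL2ae] with ω hω
    haveI := h.1 ω
    have hvar := variance_nonneg f (ptilde ω)
    rw [variance_eq_sub hω] at hvar
    simp only [Pi.pow_apply] at hvar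
    simp only [hmdef, hg2cdef]
    linarith
  have hm_sq_int : Integrable (fun ω => m ω ^ 2) μ := by
    refine Integrable.mono hg2c_int ((hm.pow_const 2).aestronglyMeasurable) ?_
    filter_upwards [hm2_le] with ω hω
    rw [Real.norm_eq_abs, Real.norm_eq_abs, abs_of_nonneg (sq_nonneg _)]
    exact hω.trans (le_abs_self _)
  have hmL2 : MemLp m 2 μ := (memLp_two_iff_integrable_sq hm.aestronglyMeasurable).mpr hm_sq_int
  -- identity (a) : ∫ f(ξ i)² = E0
  have key_a : ∀ i, ∫ ω, f (ξ i ω) ^ 2 ∂μ = E0 := by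
    intro i
    have hGm : StronglyMeasurable fun z : PM × ℝ => f z.2 ^ 2 :=
      ((hf.comp measurable_snd).pow_const 2).stronglyMeasurable
    rw [hE0def, int_single h i hGm (hXsq_int i), int_single h 0 hGm (hXsq_int 0)]
  -- identity (d) : ∫ (M q)² dQ = C
  have key_d : ∫ q, M q * M q ∂Q = C := by
    rw [hCdef, hQdef, integral_map hphat.aemeasurable (f := fun q => M q * M q) ((hM.mul hM).aestronglyMeasurable)]
    refine integral_congr_ae (Filter.Eventually.of_forall fun ω => ?_)
    show M (phat h ω) * M (phat h ω) = m ω ^ 2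
    rw [pow_two]
    rfl
  -- identity (c) : ∫ f(ξ i) m = C
  have key_c : ∀ i, ∫ ω, f (ξ i ω) * m ω ∂μ = C := by
    intro i
    have hGm : StronglyMeasurable fun z : PM × ℝ => f z.2 * M z.1 :=
      ((hf.comp measurable_snd).mul (hM.comp measurable_fst)).stronglyMeasurable
    have hGi : Integrable (fun ω => f (ξ i ω) * m ω) μ := mul_L2_int (hXL2 i) hmL2
    calc ∫ ω, f (ξ i ω) * m ω ∂μ
        = ∫ q, ∫ x, f x * M q ∂q.1 ∂Q := int_single h i hGm hGi
      _ = ∫ q, M q * M q ∂Q :=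
          integral_congr_ae (Filter.Eventually.of_forall fun q => integral_mul_const (M q) f)
      _ = C := key_d
  -- identity (b) : ∫ f(ξ i) f(ξ j) = C for i ≠ j
  have key_b : ∀ i j, i ≠ j → ∫ ω, f (ξ i ω) * f (ξ j ω) ∂μ = C := by
    intro i j hij
    have hGm : StronglyMeasurable fun z : PM × (ℝ × ℝ) => f z.2.1 * f z.2.2 :=
      ((hf.comp (measurable_fst.comp measurable_snd)).mul
        (hf.comp (measurable_snd.comp measurable_snd))).stronglyMeasurable
    have hGi : Integrable (fun ω => f (ξ i ω) * f (ξ j ω)) μ := mul_L2_int (hXL2 i) (hXL2 j)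
    calc ∫ ω, f (ξ i ω) * f (ξ j ω) ∂μ
        = ∫ q, ∫ z : ℝ × ℝ, f z.1 * f z.2 ∂(q.1.prod q.1) ∂Q := int_pair h hij hGm hGi
      _ = ∫ q, M q * M q ∂Q := by
          refine integral_congr_ae (Filter.Eventually.of_forall fun q => ?_)
          haveI := q.2
          exact integral_prod_mul f f
      _ = C := key_d
  -- the Y variables
  set Y : ℕ → Ω → ℝ := fun i ω => f (ξ i ω) - m ω with hYdef
  have hYL2 : ∀ i, MemLp (Y i) 2 μ := fun i => (hXL2 i).sub hmL2
  have intYY : ∀ i j, Integrable (fun ω => Y i ω * Y j ω) μ := fun i j =>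
    mul_L2_int (hYL2 i) (hYL2 j)
  -- ∫ Y i Y j
  have hYint : ∀ i j, ∫ ω, Y i ω * Y j ω ∂μ = if i = j then E0 - C else 0 := by
    intro i j
    have int1 : Integrable (fun ω => f (ξ i ω) * f (ξ j ω)) μ := mul_L2_int (hXL2 i) (hXL2 j)
    have int2 : Integrable (fun ω => f (ξ i ω) * m ω) μ := mul_L2_int (hXL2 i) hmL2
    have int3 : Integrable (fun ω => f (ξ j ω) * m ω) μ := mul_L2_int (hXL2 j) hmL2
    have e : (fun ω => Y i ω * Y j ω) = fun ω =>
        (f (ξ i ω) * f (ξ j ω) - f (ξ i ω) * m ω) - (f (ξ j ω) * m ω - m ω ^ 2) := by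
      funext ω
      simp only [hYdef]
      ring
    have intA : Integrable (fun ω => f (ξ i ω) * f (ξ j ω) - f (ξ i ω) * m ω) μ :=
      int1.sub int2
    have intB : Integrable (fun ω => f (ξ j ω) * m ω - m ω ^ 2) μ := int3.sub hm_sq_int
    rw [e, integral_sub intA intB, integral_sub int1 int2,
      integral_sub int3 hm_sq_int, key_c i, key_c j]
    by_cases hij : i = j
    · subst hij
      rw [if_pos rfl]
      have : ∫ ω, f (ξ i ω) * f (ξ i ω) ∂μ = E0 := by
        rw [← key_a i]
        exact integral_congr_ae (Filter.Eventually.of_forall fun ω => (pow_two _).symm)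
      rw [this]
      ring
    · rw [if_neg hij, key_b i j hij]
      ring
  -- the normalized sum
  set S : Ω → ℝ := fun ω => (1 / N : ℝ) * ∑ i ∈ Finset.range N, f (ξ i ω) with hSdef
  have hS : Measurable S := by
    apply Measurable.const_mul
    exact Finset.measurable_sum _ fun i _ => hX i
  have hNne : (N : ℝ) ≠ 0 := Nat.cast_ne_zero.mpr hN.ne'
  have hSsumL2 : MemLp (fun ω => ∑ i ∈ Finset.range N, f (ξ i ω)) 2 μ :=
    memLp_finset_sum _ fun i _ => hXL2 i
  have hSL2 : MemLp S 2 μ := hSsumL2.const_mul _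
  have hSm : ∀ ω, S ω - m ω = (1 / N : ℝ) * ∑ i ∈ Finset.range N, Y i ω := by
    intro ω
    simp only [hSdef, hYdef]
    rw [Finset.sum_sub_distrib, Finset.sum_const, Finset.card_range, nsmul_eq_mul]
    field_simp
  -- expand the square of the sum
  have hYsum_int : ∀ i, Integrable (fun ω => ∑ j ∈ Finset.range N, Y i ω * Y j ω) μ :=
    fun i => integrable_finset_sum _ fun j _ => intYY i j
  have expand : ∫ ω, (∑ i ∈ Finset.range N, Y i ω) ^ 2 ∂μ = N * (E0 - C) := by
    have e : ∀ ω, (∑ i ∈ Finset.range N, Y i ω) ^ 2 =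
        ∑ i ∈ Finset.range N, ∑ j ∈ Finset.range N, Y i ω * Y j ω := by
      intro ω
      rw [pow_two, Finset.sum_mul_sum]
    calc ∫ ω, (∑ i ∈ Finset.range N, Y i ω) ^ 2 ∂μ
        = ∫ ω, ∑ i ∈ Finset.range N, ∑ j ∈ Finset.range N, Y i ω * Y j ω ∂μ := by
          exact integral_congr_ae (Filter.Eventually.of_forall fun ω => e ω)
      _ = ∑ i ∈ Finset.range N, ∫ ω, ∑ j ∈ Finset.range N, Y i ω * Y j ω ∂μ :=
          integral_finset_sum _ fun i _ => hYsum_int i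
      _ = ∑ i ∈ Finset.range N, ∑ j ∈ Finset.range N, ∫ ω, Y i ω * Y j ω ∂μ :=
          Finset.sum_congr rfl fun i _ => integral_finset_sum _ fun j _ => intYY i j
      _ = ∑ i ∈ Finset.range N, ∑ j ∈ Finset.range N, if i = j then E0 - C else 0 :=
          Finset.sum_congr rfl fun i _ => Finset.sum_congr rfl fun j _ => hYint i j
      _ = ∑ i ∈ Finset.range N, (E0 - C) := by
          refine Finset.sum_congr rfl fun i hi => ?_
          rw [Finset.sum_ite_eq (Finset.range N) i (fun _ => E0 - C), if_pos hi]
      _ = N * (E0 - C) := by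
          rw [Finset.sum_const, Finset.card_range, nsmul_eq_mul]
  have hvar : ∫ ω, (S ω - m ω) ^ 2 ∂μ = (E0 - C) / N := by
    have e : ∀ ω, (S ω - m ω) ^ 2 =
        (1 / N : ℝ) ^ 2 * (∑ i ∈ Finset.range N, Y i ω) ^ 2 := by
      intro ω
      rw [hSm ω, mul_pow]
    calc ∫ ω, (S ω - m ω) ^ 2 ∂μ
        = ∫ ω, (1 / N : ℝ) ^ 2 * (∑ i ∈ Finset.range N, Y i ω) ^ 2 ∂μ :=
          integral_congr_ae (Filter.Eventually.of_forall e)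
      _ = (1 / N : ℝ) ^ 2 * ∫ ω, (∑ i ∈ Finset.range N, Y i ω) ^ 2 ∂μ :=
          integral_const_mul _ _
      _ = (1 / N : ℝ) ^ 2 * (N * (E0 - C)) := by rw [expand]
      _ = (E0 - C) / N := by field_simp
  have hE0C : ∫ ω, (f (ξ 0 ω) - m ω) ^ 2 ∂μ = E0 - C := by
    have := hYint 0 0
    rw [if_pos rfl] at this
    rw [← this]
    exact integral_congr_ae (Filter.Eventually.of_forall fun ω => by
      simp only [hYdef]; ring)
  have habs : ∫ ω, |f (ξ 0 ω) - m ω| ^ 2 ∂μ = E0 - C := by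
    rw [← hE0C]
    exact integral_congr_ae (Filter.Eventually.of_forall fun ω => sq_abs _)
  have hE0C_nonneg : 0 ≤ E0 - C := hE0C ▸ integral_nonneg fun ω => sq_nonneg _
  have hC_nonneg : 0 ≤ C := integral_nonneg fun ω => sq_nonneg _
  have hE0_nonneg : 0 ≤ E0 := integral_nonneg fun ω => sq_nonneg _
  have hsqrtN_pos : 0 < Real.sqrt N := Real.sqrt_pos.mpr (Nat.cast_pos.mpr hN)
  -- Part 1 : w1 bound via the natural coupling
  have hSmL2 : MemLp (fun ω => S ω - m ω) 2 μ := hSL2.sub hmL2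
  have hSmint : Integrable (fun ω => S ω - m ω) μ := hSmL2.integrable one_le_two
  have hw1 : w1 (μ.map S) (μ.map m) ≤ ∫ ω, |S ω - m ω| ∂μ := by
    have hpair : Measurable fun ω => (S ω, m ω) := hS.prodMk hm
    have habsm : AEStronglyMeasurable (fun z : ℝ × ℝ => |z.1 - z.2|)
        (μ.map fun ω => (S ω, m ω)) :=
      ((measurable_fst.sub measurable_snd).abs).aestronglyMeasurable
    have hmem : (∫ ω, |S ω - m ω| ∂μ) ∈ {x | ∃ γ : Measure (ℝ × ℝ),
        IsProbabilityMeasure γ ∧ γ.map Prod.fst = μ.map S ∧ γ.map Prod.snd = μ.map m ∧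
        x = ∫ z, |z.1 - z.2| ∂γ} := by
      refine ⟨μ.map fun ω => (S ω, m ω), Measure.isProbabilityMeasure_map hpair.aemeasurable,
        ?_, ?_, ?_⟩
      · rw [Measure.map_map measurable_fst hpair]
        rfl
      · rw [Measure.map_map measurable_snd hpair]
        rfl
      · rw [integral_map hpair.aemeasurable habsm]
    have hbdd : BddBelow {x | ∃ γ : Measure (ℝ × ℝ),
        IsProbabilityMeasure γ ∧ γ.map Prod.fst = μ.map S ∧ γ.map Prod.snd = μ.map m ∧
        x = ∫ z, |z.1 - z.2| ∂γ} := by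
      refine ⟨0, ?_⟩
      rintro x ⟨γ', hγ', h1, h2, rfl⟩
      exact integral_nonneg fun z => abs_nonneg _
    exact csInf_le hbdd hmem
  have hCS : ∫ ω, |S ω - m ω| ∂μ ≤ Real.sqrt ((E0 - C) / N) := by
    rw [← hvar]
    exact abs_int_le_sqrt hSmL2
  have hsqrt_eq : Real.sqrt ((E0 - C) / N) = (1 / Real.sqrt N) * (E0 - C) ^ (1/2 : ℝ) := by
    rw [Real.sqrt_div hE0C_nonneg, ← Real.sqrt_eq_rpow]
    rw [div_eq_mul_inv, mul_comm, one_div]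
  constructor
  · rw [habs]
    calc w1 (μ.map S) (μ.map m) ≤ ∫ ω, |S ω - m ω| ∂μ := hw1
      _ ≤ Real.sqrt ((E0 - C) / N) := hCS
      _ = (1 / Real.sqrt N) * (E0 - C) ^ (1/2 : ℝ) := hsqrt_eq
  · rw [habs, ← Real.sqrt_eq_rpow]
    have h1 : Real.sqrt (E0 - C) ≤ Real.sqrt E0 := Real.sqrt_le_sqrt (by linarith)
    calc (1 / Real.sqrt N) * Real.sqrt (E0 - C)
        ≤ (1 / Real.sqrt N) * Real.sqrt E0 :=
          mul_le_mul_of_nonneg_left h1 (by positivity)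
      _ ≤ (2 / Real.sqrt N) * Real.sqrt E0 := by
          exact mul_le_mul_of_nonneg_right
            ((div_le_div_iff_of_pos_right hsqrtN_pos).mpr one_le_two) (Real.sqrt_nonneg _)
end

section
/- Let Z be distributed as a mixture: P{Z ≤ x} = (1/B(N+1,N+1)) ∫_0^1 t^N(1-t)^N [1 - H_x(t)] dt where H_x(t) = P{F̃(x) ≤ t} for a random distribution function F̃ with E[F̃(x)] = G(x). Then P{Z ≤ x} ≤ G(x)·(2N+1)/N and P{Z > x} ≤ (1 - G(x^-))·(2N+1)/N; consequently if G is a (tight) distribution function on ℝ, the family of laws of Z over N ≥ 1 is uniformly tight. -/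
open MeasureTheory intervalIntegral

lemma aux_intInt {f : ℝ → ℝ} (hm : Measurable f) (C : ℝ)
    (hb : ∀ t ∈ Set.Ioc (0:ℝ) 1, ‖f t‖ ≤ C) : IntervalIntegrable f volume 0 1 := by
  rw [intervalIntegrable_iff, Set.uIoc_of_le zero_le_one]
  apply Measure.integrableOn_of_bounded (M := C)
  · exact measure_Ioc_lt_top.ne
  · exact hm.aestronglyMeasurable
  · exact (ae_restrict_iff' measurableSet_Ioc).2 (Filter.Eventually.of_forall hb)

lemma aux_reflect (a b : ℕ) :
    (∫ t in (0:ℝ)..1, t ^ a * (1 - t) ^ b) = ∫ t in (0:ℝ)..1, t ^ b * (1 - t) ^ a := by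
  have h := intervalIntegral.integral_comp_sub_left (a := (0:ℝ)) (b := 1)
    (fun u : ℝ => u ^ b * (1 - u) ^ a) 1
  simp only [sub_sub_cancel, sub_zero, sub_self] at h
  rw [← h]
  exact integral_congr fun t _ => by ring

lemma aux_ratio (M : ℕ) :
    (∫ t in (0:ℝ)..1, t ^ M * (1 - t) ^ (M+1)) * ((M:ℝ) + 1) =
    (∫ t in (0:ℝ)..1, t ^ (M+1) * (1 - t) ^ (M+1)) * (2 * ((M:ℝ) + 1) + 1) := by
  have cf : Continuous fun t : ℝ => t ^ M * (1 - t) ^ (M+1) := by fun_prop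
  have cg : Continuous fun t : ℝ => t ^ (M+1) * (1 - t) ^ (M+1) := by fun_prop
  have hderiv : ∀ t ∈ Set.uIcc (0:ℝ) 1,
      HasDerivAt (fun t : ℝ => t ^ (M+1) * (1 - t) ^ (M+2))
        (((M:ℝ)+1) * (t ^ M * (1-t)^(M+1)) - (2*((M:ℝ)+1)+1) * (t^(M+1)*(1-t)^(M+1))) t := by
    intro t _
    have h1 : HasDerivAt (fun t : ℝ => t ^ (M+1)) (((M:ℝ)+1) * t ^ M) t := by
      simpa using hasDerivAt_pow (M+1) t
    have h2 : HasDerivAt (fun t : ℝ => (1 - t) ^ (M+2))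
        ((((M:ℝ)+2) * (1-t)^(M+1)) * (-1)) t := by
      have hin : HasDerivAt (fun t : ℝ => 1 - t) (-1) t := (hasDerivAt_id t).const_sub 1
      have := (hasDerivAt_pow (M+2) (1-t)).comp t hin
      simpa [mul_comm, Function.comp_def] using this
    have h3 := h1.fun_mul h2
    exact h3.congr_deriv (by ring)
  have key := integral_eq_sub_of_hasDerivAt hderiv
    ((by fun_prop : Continuous fun t : ℝ =>
      ((M:ℝ)+1) * (t ^ M * (1-t)^(M+1)) - (2*((M:ℝ)+1)+1) * (t^(M+1)*(1-t)^(M+1))).intervalIntegrable 0 1)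
  simp only [one_pow, sub_self, zero_pow, Nat.succ_ne_zero, mul_zero, zero_mul, sub_zero,
    one_mul, Nat.add_eq_zero, and_false, false_and, ne_eq, not_false_iff] at key
  rw [integral_sub ((by fun_prop : Continuous fun t : ℝ => ((M:ℝ)+1) * (t ^ M * (1-t)^(M+1))).intervalIntegrable 0 1) ((by fun_prop : Continuous fun t : ℝ => (2*((M:ℝ)+1)+1) * (t^(M+1)*(1-t)^(M+1))).intervalIntegrable 0 1),
      intervalIntegral.integral_const_mul, intervalIntegral.integral_const_mul] at key
  linarith [key]

/-- Let `Z N` have distribution function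
`x ↦ (1/B(N+1,N+1)) ∫_0^1 t^N(1-t)^N [1 - H_x(t)] dt`, where `H_x(t) = P{F̃(x) ≤ t}`
for a random distribution function `F̃` with `E[F̃(x)] = G(x)`.  Then
`P{Z ≤ x} ≤ G(x)(2N+1)/N`, `P{Z > x} ≤ (1 - G(x⁻))(2N+1)/N`, and consequently the
family of laws of `Z N`, `N ≥ 1`, is uniformly tight. -/
theorem stmt12 {Ω : Type*} [MeasurableSpace Ω] (μ : Measure Ω) [IsProbabilityMeasure μ]
    (Ftilde : Ω → ℝ → ℝ) (G : ℝ → ℝ)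
    (hFmeas : ∀ x, Measurable fun ω => Ftilde ω x)
    (hFmono : ∀ ω, Monotone (Ftilde ω))
    (hF01 : ∀ ω x, Ftilde ω x ∈ Set.Icc (0 : ℝ) 1)
    (hG : ∀ x, ∫ ω, Ftilde ω x ∂μ = G x)
    (hGmono : Monotone G)
    (hG0 : Filter.Tendsto G Filter.atBot (nhds 0))
    (hG1 : Filter.Tendsto G Filter.atTop (nhds 1))
    (Z : ℕ → Ω → ℝ) (hZmeas : ∀ N, Measurable (Z N))
    (hZ : ∀ N, 1 ≤ N → ∀ x, (μ {ω | Z N ω ≤ x}).toReal =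
      (∫ t in (0:ℝ)..1, t ^ N * (1 - t) ^ N * (1 - (μ {ω | Ftilde ω x ≤ t}).toReal)) /
        (∫ t in (0:ℝ)..1, t ^ N * (1 - t) ^ N)) :
    (∀ N, 1 ≤ N → ∀ x, (μ {ω | Z N ω ≤ x}).toReal ≤ G x * (2 * N + 1) / N) ∧
    (∀ N, 1 ≤ N → ∀ x,
      (μ {ω | x < Z N ω}).toReal ≤ (1 - Function.leftLim G x) * (2 * N + 1) / N) ∧
    (∀ ε : ℝ, 0 < ε → ∃ M : ℝ, 0 < M ∧ ∀ N, 1 ≤ N →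
      (μ {ω | M < |Z N ω|}).toReal ≤ ε) := by
  have hFint : ∀ y, Integrable (fun ω => Ftilde ω y) μ := fun y =>
    (integrable_const (1:ℝ)).mono' (hFmeas y).aestronglyMeasurable
      (Filter.Eventually.of_forall fun ω => by
        rw [Real.norm_eq_abs, abs_le]
        exact ⟨by linarith [(hF01 ω y).1], (hF01 ω y).2⟩)
  have hG0' : ∀ y, 0 ≤ G y := fun y => by
    rw [← hG y]; exact integral_nonneg fun ω => (hF01 ω y).1
  have hG1' : ∀ y, G y ≤ 1 := fun y => by
    rw [← hG y]
    calc ∫ ω, Ftilde ω y ∂μ ≤ ∫ _ω, (1:ℝ) ∂μ :=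
          integral_mono (hFint y) (integrable_const 1) fun ω => (hF01 ω y).2
      _ = 1 := by simp
  have tri : ∀ a b c : ℝ, 0 ≤ a → a ≤ 1 → 0 ≤ b → b ≤ 1 → 0 ≤ c → c ≤ 1 → a*b*c ≤ 1 := by
    intros a b c h1 h2 h3 h4 h5 h6
    have hab : a*b ≤ 1 := by nlinarith
    calc a*b*c ≤ 1*c := mul_le_mul_of_nonneg_right hab h5
      _ ≤ 1 := by linarith
  have main : ∀ N, 1 ≤ N → ∀ x,
      (μ {ω | Z N ω ≤ x}).toReal ≤ G x * (2 * N + 1) / N ∧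
      (μ {ω | x < Z N ω}).toReal ≤ (1 - G x) * (2 * N + 1) / N := by
    intro N hN x
    obtain ⟨M, rfl⟩ : ∃ M, N = M + 1 := ⟨N - 1, (Nat.succ_pred_eq_of_pos hN).symm⟩
    have hMpos : (0:ℝ) < (M:ℝ) + 1 := by positivity
    have hHmono : Monotone (fun t : ℝ => (μ {ω | Ftilde ω x ≤ t}).toReal) := fun s t hst =>
      ENNReal.toReal_mono (measure_ne_top μ _) (measure_mono fun ω h => le_trans h hst)
    have hH0 : ∀ t : ℝ, 0 ≤ (μ {ω | Ftilde ω x ≤ t}).toReal := fun t => ENNReal.toReal_nonneg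
    have hH1 : ∀ t : ℝ, (μ {ω | Ftilde ω x ≤ t}).toReal ≤ 1 := fun t => by
      simpa using ENNReal.toReal_mono ENNReal.one_ne_top prob_le_one
    have hmark1 : ∀ t : ℝ, 0 ≤ t →
        t * (1 - (μ {ω | Ftilde ω x ≤ t}).toReal) ≤ G x := by
      intro t ht
      have hset : {ω | Ftilde ω x ≤ t}ᶜ = {ω | t < Ftilde ω x} := by ext ω; simp [not_le]
      have hcompl : (1 : ℝ) - (μ {ω | Ftilde ω x ≤ t}).toReal
          = (μ {ω | t < Ftilde ω x}).toReal := by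
        rw [← hset, measure_compl (measurableSet_le (hFmeas x) measurable_const)
            (measure_ne_top μ _), measure_univ,
          ENNReal.toReal_sub_of_le prob_le_one ENNReal.one_ne_top, ENNReal.toReal_one]
      rw [hcompl]
      calc t * (μ {ω | t < Ftilde ω x}).toReal
          ≤ t * (μ {ω | t ≤ Ftilde ω x}).toReal :=
            mul_le_mul_of_nonneg_left
              (ENNReal.toReal_mono (measure_ne_top μ _)
                (measure_mono (Set.setOf_subset_setOf.2 fun ω h => le_of_lt h))) ht
        _ ≤ ∫ ω, Ftilde ω x ∂μ := by
            simpa [Measure.real] using mul_meas_ge_le_integral_of_nonneg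
              (Filter.Eventually.of_forall fun ω => (hF01 ω x).1) (hFint x) t
        _ = G x := hG x
    have hmark2 : ∀ t : ℝ,
        (1 - t) * (μ {ω | Ftilde ω x ≤ t}).toReal ≤ 1 - G x := by
      intro t
      have hint1 : Integrable (fun ω => 1 - Ftilde ω x) μ := (integrable_const 1).sub (hFint x)
      have h := mul_meas_ge_le_integral_of_nonneg
        (Filter.Eventually.of_forall fun ω => by
          simp only [Pi.zero_apply]; linarith [(hF01 ω x).2]) hint1 (1 - t)
      rw [integral_sub (integrable_const 1) (hFint x), hG x] at h
      simp only [MeasureTheory.integral_const, measure_univ, ENNReal.toReal_one,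
        smul_eq_mul, one_mul] at h
      have hset : {ω | 1 - t ≤ 1 - Ftilde ω x} = {ω | Ftilde ω x ≤ t} := by
        ext ω; simp only [Set.mem_setOf_eq]; constructor <;> intro <;> linarith
      rw [hset] at h
      simpa [Measure.real] using h
    have contf : Continuous fun t : ℝ => t ^ (M+1) * (1 - t) ^ (M+1) := by fun_prop
    have hfi : IntervalIntegrable (fun t : ℝ => t ^ (M+1) * (1 - t) ^ (M+1)) volume 0 1 :=
      contf.intervalIntegrable 0 1
    have hmeasH : Measurable (fun t : ℝ => (μ {ω | Ftilde ω x ≤ t}).toReal) := hHmono.measurable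
    have hbnd : ∀ (g : ℝ → ℝ), (∀ t, |g t| ≤ 1) → ∀ t ∈ Set.Ioc (0:ℝ) 1,
        ‖t ^ (M+1) * (1 - t) ^ (M+1) * g t‖ ≤ 1 := by
      intro g hg t ht
      rw [Real.norm_eq_abs, abs_mul, abs_mul, abs_pow, abs_pow]
      have h1 : |t| ≤ 1 := abs_le.2 ⟨by linarith [ht.1], ht.2⟩
      have h2 : |1 - t| ≤ 1 := abs_le.2 ⟨by linarith [ht.2], by linarith [ht.1]⟩
      exact tri _ _ _ (pow_nonneg (abs_nonneg _) _) (pow_le_one₀ (abs_nonneg _) h1)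
        (pow_nonneg (abs_nonneg _) _) (pow_le_one₀ (abs_nonneg _) h2) (abs_nonneg _) (hg t)
    have hfHi : IntervalIntegrable
        (fun t : ℝ => t ^ (M+1) * (1 - t) ^ (M+1) * (μ {ω | Ftilde ω x ≤ t}).toReal) volume 0 1 :=
      aux_intInt (contf.measurable.mul hmeasH) 1
        (hbnd _ (fun t => abs_le.2 ⟨by linarith [hH0 t], hH1 t⟩))
    have hfH'i : IntervalIntegrable
        (fun t : ℝ => t ^ (M+1) * (1 - t) ^ (M+1) * (1 - (μ {ω | Ftilde ω x ≤ t}).toReal)) volume 0 1 :=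
      aux_intInt (contf.measurable.mul (measurable_const.sub hmeasH)) 1
        (hbnd _ (fun t => abs_le.2 ⟨by linarith [hH1 t], by linarith [hH0 t]⟩))
    have hc : 0 < ∫ t in (0:ℝ)..1, t ^ (M+1) * (1 - t) ^ (M+1) :=
      intervalIntegral_pos_of_pos_on hfi
        (fun t ht => mul_pos (pow_pos ht.1 _) (pow_pos (by linarith [ht.2]) _)) zero_lt_one
    have hJval : (∫ t in (0:ℝ)..1, t ^ M * (1 - t) ^ (M+1))
        = (∫ t in (0:ℝ)..1, t ^ (M+1) * (1 - t) ^ (M+1)) * (2 * ((M:ℝ) + 1) + 1) / ((M:ℝ) + 1) := by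
      rw [eq_div_iff hMpos.ne']
      exact aux_ratio M
    have hZeq := hZ (M+1) hN x
    have hcast : ((M+1 : ℕ) : ℝ) = (M:ℝ)+1 := by push_cast; ring
    constructor
    · rw [hZeq, div_le_iff₀ hc]
      have hA : (∫ t in (0:ℝ)..1, t ^ (M+1) * (1 - t) ^ (M+1) * (1 - (μ {ω | Ftilde ω x ≤ t}).toReal))
          ≤ G x * ∫ t in (0:ℝ)..1, t ^ M * (1 - t) ^ (M+1) := by
        rw [← intervalIntegral.integral_const_mul]
        apply integral_mono_on zero_le_one hfH'i
          ((continuous_const.mul (by fun_prop : Continuous fun t : ℝ => t ^ M * (1-t) ^ (M+1))).intervalIntegrable 0 1)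
        intro t ht
        calc t ^ (M+1) * (1 - t) ^ (M+1) * (1 - (μ {ω | Ftilde ω x ≤ t}).toReal)
            = (t ^ M * (1 - t) ^ (M+1)) * (t * (1 - (μ {ω | Ftilde ω x ≤ t}).toReal)) := by ring
          _ ≤ (t ^ M * (1 - t) ^ (M+1)) * G x :=
              mul_le_mul_of_nonneg_left (hmark1 t ht.1)
                (mul_nonneg (pow_nonneg ht.1 _) (pow_nonneg (by linarith [ht.2]) _))
          _ = G x * (t ^ M * (1 - t) ^ (M+1)) := mul_comm _ _
      calc (∫ t in (0:ℝ)..1, t ^ (M+1) * (1 - t) ^ (M+1) * (1 - (μ {ω | Ftilde ω x ≤ t}).toReal))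
          ≤ G x * ∫ t in (0:ℝ)..1, t ^ M * (1 - t) ^ (M+1) := hA
        _ = G x * (2 * ((M+1:ℕ):ℝ) + 1) / ((M+1:ℕ):ℝ) * ∫ t in (0:ℝ)..1, t ^ (M+1) * (1-t)^(M+1) := by
            rw [hJval, hcast]; field_simp
    · have hcomp : (μ {ω | x < Z (M+1) ω}).toReal = 1 - (μ {ω | Z (M+1) ω ≤ x}).toReal := by
        have hset : {ω | x < Z (M+1) ω} = {ω | Z (M+1) ω ≤ x}ᶜ := by ext ω; simp [not_le]
        rw [hset, measure_compl (measurableSet_le (hZmeas _) measurable_const)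
            (measure_ne_top μ _), measure_univ,
          ENNReal.toReal_sub_of_le prob_le_one ENNReal.one_ne_top, ENNReal.toReal_one]
      have hsplit : (∫ t in (0:ℝ)..1, t^(M+1)*(1-t)^(M+1) * (1 - (μ {ω | Ftilde ω x ≤ t}).toReal))
          = (∫ t in (0:ℝ)..1, t^(M+1)*(1-t)^(M+1))
            - ∫ t in (0:ℝ)..1, t^(M+1)*(1-t)^(M+1) * (μ {ω | Ftilde ω x ≤ t}).toReal := by
        rw [eq_sub_iff_add_eq, ← integral_add hfH'i hfHi]
        exact integral_congr fun t _ => by ring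
      have hA' : (∫ t in (0:ℝ)..1, t ^ (M+1) * (1 - t) ^ (M+1) * (μ {ω | Ftilde ω x ≤ t}).toReal)
          ≤ (1 - G x) * ∫ t in (0:ℝ)..1, t ^ M * (1 - t) ^ (M+1) := by
        rw [aux_reflect M (M+1), ← intervalIntegral.integral_const_mul]
        apply integral_mono_on zero_le_one hfHi
          ((continuous_const.mul (by fun_prop : Continuous fun t : ℝ => t ^ (M+1) * (1-t) ^ M)).intervalIntegrable 0 1)
        intro t ht
        calc t ^ (M+1) * (1 - t) ^ (M+1) * (μ {ω | Ftilde ω x ≤ t}).toReal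
            = (t ^ (M+1) * (1 - t) ^ M) * ((1 - t) * (μ {ω | Ftilde ω x ≤ t}).toReal) := by ring
          _ ≤ (t ^ (M+1) * (1 - t) ^ M) * (1 - G x) :=
              mul_le_mul_of_nonneg_left (hmark2 t)
                (mul_nonneg (pow_nonneg ht.1 _) (pow_nonneg (by linarith [ht.2]) _))
          _ = (1 - G x) * (t ^ (M+1) * (1 - t) ^ M) := mul_comm _ _
      rw [hcomp, hZeq, hsplit]
      have e1 : 1 - ((∫ t in (0:ℝ)..1, t^(M+1)*(1-t)^(M+1))
            - ∫ t in (0:ℝ)..1, t^(M+1)*(1-t)^(M+1) * (μ {ω | Ftilde ω x ≤ t}).toReal)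
            / (∫ t in (0:ℝ)..1, t^(M+1)*(1-t)^(M+1))
          = (∫ t in (0:ℝ)..1, t^(M+1)*(1-t)^(M+1) * (μ {ω | Ftilde ω x ≤ t}).toReal)
            / (∫ t in (0:ℝ)..1, t^(M+1)*(1-t)^(M+1)) := by
        field_simp
        ring
      rw [e1, div_le_iff₀ hc]
      calc (∫ t in (0:ℝ)..1, t^(M+1)*(1-t)^(M+1) * (μ {ω | Ftilde ω x ≤ t}).toReal)
          ≤ (1 - G x) * ∫ t in (0:ℝ)..1, t ^ M * (1 - t) ^ (M+1) := hA'
        _ = (1 - G x) * (2 * ((M+1:ℕ):ℝ) + 1) / ((M+1:ℕ):ℝ) * ∫ t in (0:ℝ)..1, t ^ (M+1) * (1-t)^(M+1) := by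
            rw [hJval, hcast]; field_simp
  have key2 : ∀ N, 1 ≤ N → ∀ x,
      (μ {ω | x < Z N ω}).toReal ≤ (1 - Function.leftLim G x) * (2 * N + 1) / N := by
    intro N hN x
    have h2 := (main N hN x).2
    have hNpos : (0:ℝ) < N := by exact_mod_cast hN
    have hfac : (0:ℝ) ≤ (2*N+1)/N := by positivity
    have hll : Function.leftLim G x ≤ G x := hGmono.leftLim_le le_rfl
    calc (μ {ω | x < Z N ω}).toReal ≤ (1 - G x) * (2*N+1)/N := h2
      _ ≤ (1 - Function.leftLim G x) * (2*N+1)/N := by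
        rw [mul_div_assoc, mul_div_assoc]
        exact mul_le_mul_of_nonneg_right (by linarith) hfac
  refine ⟨fun N hN x => (main N hN x).1, key2, ?_⟩
  intro ε hε
  obtain ⟨a, ha⟩ := Filter.eventually_atTop.1
    (hG1.eventually (eventually_gt_nhds (by linarith : 1 - ε/6 < 1)))
  obtain ⟨b, hb⟩ := Filter.eventually_atBot.1
    (hG0.eventually (eventually_lt_nhds (by linarith : (0:ℝ) < ε/6)))
  refine ⟨max (max (a+1) (-b+1)) 1, lt_of_lt_of_le zero_lt_one (le_max_right _ _), ?_⟩
  intro N hN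
  set Mc := max (max (a+1) (-b+1)) 1 with hMc
  have hNpos : (0:ℝ) < N := by exact_mod_cast hN
  have hfac3 : (2*(N:ℝ)+1)/N ≤ 3 := by
    rw [div_le_iff₀ hNpos]
    have : (1:ℝ) ≤ N := by exact_mod_cast hN
    linarith
  have hfacnn : (0:ℝ) ≤ (2*(N:ℝ)+1)/N := by positivity
  have haMc : a < Mc := lt_of_lt_of_le (by linarith)
    ((le_max_left (a+1) (-b+1)).trans (le_max_left _ _))
  have hbMc : -Mc ≤ b := by
    have : -b + 1 ≤ Mc := (le_max_right (a+1) (-b+1)).trans (le_max_left _ _)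
    linarith
  have hup : (μ {ω | Mc < Z N ω}).toReal ≤ ε/2 := by
    have h1 := key2 N hN Mc
    have hGa : 1 - ε/6 < G a := ha a le_rfl
    have hla : G a ≤ Function.leftLim G Mc := hGmono.le_leftLim haMc
    have hll1 : Function.leftLim G Mc ≤ 1 := (hGmono.leftLim_le le_rfl).trans (hG1' Mc)
    calc (μ {ω | Mc < Z N ω}).toReal ≤ (1 - Function.leftLim G Mc) * (2*N+1)/N := h1
      _ = (1 - Function.leftLim G Mc) * ((2*N+1)/N) := by rw [mul_div_assoc]
      _ ≤ (ε/6) * 3 := mul_le_mul (by linarith) hfac3 hfacnn (by linarith)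
      _ = ε/2 := by ring
  have hdown : (μ {ω | Z N ω ≤ -Mc}).toReal ≤ ε/2 := by
    have h1 := (main N hN (-Mc)).1
    have hGb : G (-Mc) ≤ G b := hGmono hbMc
    have hGb2 : G b < ε/6 := hb b le_rfl
    calc (μ {ω | Z N ω ≤ -Mc}).toReal ≤ G (-Mc) * (2*N+1)/N := h1
      _ = G (-Mc) * ((2*N+1)/N) := by rw [mul_div_assoc]
      _ ≤ (ε/6) * 3 := mul_le_mul (by linarith [hG0' (-Mc)]) hfac3 hfacnn (by linarith)
      _ = ε/2 := by ring
  have hsub : {ω | Mc < |Z N ω|} ⊆ {ω | Mc < Z N ω} ∪ {ω | Z N ω ≤ -Mc} := by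
    intro ω hω
    simp only [Set.mem_setOf_eq] at hω
    rcases lt_abs.mp hω with h | h
    · exact Or.inl h
    · exact Or.inr (by simp only [Set.mem_setOf_eq]; linarith)
  have htot : (μ {ω | Mc < |Z N ω|}).toReal
      ≤ (μ {ω | Mc < Z N ω}).toReal + (μ {ω | Z N ω ≤ -Mc}).toReal := by
    rw [← ENNReal.toReal_add (measure_ne_top μ _) (measure_ne_top μ _)]
    exact ENNReal.toReal_mono (ENNReal.add_ne_top.2 ⟨measure_ne_top μ _, measure_ne_top μ _⟩)
      ((measure_mono hsub).trans (measure_union_le _ _))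
  linarith
end

section
/- Let p̃ be a random probability measure on ℝ whose CDF F̃ almost surely has a unique median, with ∫|x| dp̃ < ∞ a.s., and let (ξ_k) be conditionally i.i.d. given p̃ with law p̃. Then the sample median M_N of ξ_1,...,ξ_{2N+1} converges in distribution to med(p̃) as N → ∞. -/
open MeasureTheory ProbabilityTheory Filter

/-- `M N ω` is the sample median (the `(N+1)`-th order statistic) of
`ξ 0 ω, ..., ξ (2N) ω`. -/
def IsSampleMedianSeq {Ω : Type*} (ξ : ℕ → Ω → ℝ) (M : ℕ → Ω → ℝ) : Prop :=
  ∀ N ω, N + 1 ≤ ((Finset.range (2 * N + 1)).filter fun i => ξ i ω ≤ M N ω).card ∧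
    N + 1 ≤ ((Finset.range (2 * N + 1)).filter fun i => M N ω ≤ ξ i ω).card ∧
    ∃ i ∈ Finset.range (2 * N + 1), ξ i ω = M N ω

set_option linter.unusedSectionVars false
section L1
variable {Ω : Type*} [MeasurableSpace Ω] {μ : Measure Ω}
  {ξ : ℕ → Ω → ℝ} {ptilde : Ω → Measure ℝ}

lemma condIID_lintegral (h : CondIID μ ξ ptilde) {n : ℕ} (A : Fin n → Set ℝ)
    (hA : ∀ i, MeasurableSet (A i)) (f : Measure ℝ → ENNReal) (hf : Measurable f) :
    ∫⁻ ω in {ω | ∀ i : Fin n, ξ (i : ℕ) ω ∈ A i}, f (ptilde ω) ∂μ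
      = ∫⁻ ω, f (ptilde ω) * ∏ i, ptilde ω (A i) ∂μ := by
  obtain ⟨hprob, hpm, hxm, hformula⟩ := h
  have hmeasprod : Measurable fun m : Measure ℝ => ∏ i, m (A i) :=
    Finset.measurable_prod _ fun i _ => Measure.measurable_coe (hA i)
  have hmapeq : Measure.map ptilde (μ.restrict {ω | ∀ i : Fin n, ξ (i : ℕ) ω ∈ A i})
      = (Measure.map ptilde μ).withDensity (fun m => ∏ i, m (A i)) := by
    ext B hB
    rw [Measure.map_apply hpm hB, Measure.restrict_apply (hpm hB),
      Set.inter_comm, Set.inter_comm _ (ptilde ⁻¹' B)]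
    rw [Set.inter_comm (ptilde ⁻¹' B), hformula n A B hA hB,
      withDensity_apply _ hB, ← setLIntegral_map hB hmeasprod hpm]
  calc ∫⁻ ω in {ω | ∀ i : Fin n, ξ (i : ℕ) ω ∈ A i}, f (ptilde ω) ∂μ
      = ∫⁻ m, f m ∂(Measure.map ptilde (μ.restrict {ω | ∀ i : Fin n, ξ (i : ℕ) ω ∈ A i})) := by
        rw [lintegral_map hf hpm]
    _ = ∫⁻ m, f m ∂((Measure.map ptilde μ).withDensity (fun m => ∏ i, m (A i))) := by
        rw [hmapeq]
    _ = ∫⁻ m, f m * ∏ i, m (A i) ∂(Measure.map ptilde μ) := by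
        rw [lintegral_withDensity_eq_lintegral_mul _ hmeasprod hf]
        simp [mul_comm]
    _ = ∫⁻ ω, f (ptilde ω) * ∏ i, ptilde ω (A i) ∂μ := by
        rw [lintegral_map (f := fun m => f m * ∏ i, m (A i)) (hf.mul hmeasprod) hpm]

lemma condIID_moment (h : CondIID μ ξ ptilde) (S : Finset ℕ) {A : Set ℝ}
    (hA : MeasurableSet A) (f : Measure ℝ → ENNReal) (hf : Measurable f) :
    ∫⁻ ω in {ω | ∀ i ∈ S, ξ i ω ∈ A}, f (ptilde ω) ∂μ
      = ∫⁻ ω, f (ptilde ω) * (ptilde ω A) ^ S.card ∂μ := by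
  set n := S.sup id + 1 with hn
  have hlt : ∀ i ∈ S, i < n := fun i hi => Nat.lt_succ_of_le (Finset.le_sup (f := id) hi)
  set A' : Fin n → Set ℝ := fun k => if (k : ℕ) ∈ S then A else Set.univ with hA'
  have hA'm : ∀ k, MeasurableSet (A' k) := by
    intro k; simp only [hA']; split
    · exact hA
    · exact MeasurableSet.univ
  have hset : {ω | ∀ k : Fin n, ξ (k : ℕ) ω ∈ A' k} = {ω | ∀ i ∈ S, ξ i ω ∈ A} := by
    ext ω
    simp only [Set.mem_setOf_eq, hA']
    constructor
    · intro hω i hi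
      have := hω ⟨i, hlt i hi⟩
      simpa [hi] using this
    · intro hω k
      split
      · next hk => exact hω _ hk
      · trivial
  have hprod : ∀ ω, ∏ k : Fin n, ptilde ω (A' k) = (ptilde ω A) ^ S.card := by
    intro ω
    have := h.1 ω
    have h1 : ∀ k : Fin n, ptilde ω (A' k) = if (k : ℕ) ∈ S then ptilde ω A else 1 := by
      intro k; simp only [hA']; split <;> simp
    simp_rw [h1]
    rw [← Finset.prod_filter, Finset.prod_const]
    congr 1
    refine Finset.card_bij (fun k _ => (k : ℕ)) ?_ ?_ ?_
    · intro a ha; exact (Finset.mem_filter.mp ha).2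
    · intro a ha b hb hab; exact Fin.val_injective hab
    · intro b hb; exact ⟨⟨b, hlt b hb⟩, Finset.mem_filter.mpr ⟨Finset.mem_univ _, hb⟩, rfl⟩
  rw [← hset, condIID_lintegral h A' hA'm f hf]
  simp_rw [hprod]
end L1
open MeasureTheory ProbabilityTheory Filter

section L3
variable {Ω : Type*} [MeasurableSpace Ω] {μ : Measure Ω} [IsProbabilityMeasure μ]
  {ξ : ℕ → Ω → ℝ} {ptilde : Ω → Measure ℝ}

lemma real_moment (h : CondIID μ ξ ptilde) (S : Finset ℕ) {A : Set ℝ}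
    (hA : MeasurableSet A) (j : ℕ) :
    ∫ ω, (∏ i ∈ S, A.indicator (1 : ℝ → ℝ) (ξ i ω)) * ((ptilde ω A).toReal) ^ j ∂μ
      = ∫ ω, ((ptilde ω A).toReal) ^ (S.card + j) ∂μ := by
  have hpm := h.2.1
  have hxm := h.2.2.1
  have hle1 : ∀ ω, ptilde ω A ≤ 1 := fun ω => by have := h.1 ω; exact prob_le_one
  have hfm : Measurable fun m : Measure ℝ => (m A) ^ j := (Measure.measurable_coe hA).pow_const j
  have key := condIID_moment h S hA _ hfm
  have hEm : MeasurableSet {ω | ∀ i ∈ S, ξ i ω ∈ A} := by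
    have : {ω | ∀ i ∈ S, ξ i ω ∈ A} = ⋂ i ∈ S, (ξ i) ⁻¹' A := by
      ext ω; simp
    rw [this]
    exact MeasurableSet.biInter S.countable_toSet fun i _ => (hxm i) hA
  have hkey2 : ∫⁻ ω, (∏ i ∈ S, A.indicator (1 : ℝ → ENNReal) (ξ i ω)) * (ptilde ω A) ^ j ∂μ
      = ∫⁻ ω, (ptilde ω A) ^ (S.card + j) ∂μ := by
    have e1 : ∀ ω, (ptilde ω A) ^ j * (ptilde ω A) ^ S.card = (ptilde ω A) ^ (S.card + j) := by
      intro ω; rw [← pow_add, add_comm]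
    simp_rw [e1] at key
    rw [← key, ← lintegral_indicator hEm]
    congr 1
    ext ω
    by_cases hω : ω ∈ {ω | ∀ i ∈ S, ξ i ω ∈ A}
    · rw [Set.indicator_of_mem hω]
      have : ∏ i ∈ S, A.indicator (1 : ℝ → ENNReal) (ξ i ω) = 1 :=
        Finset.prod_eq_one fun i hi => by rw [Set.indicator_of_mem (hω i hi)]; rfl
      rw [this, one_mul]
    · rw [Set.indicator_of_notMem hω]
      obtain ⟨i, hi, hiA⟩ := by simpa [Set.mem_setOf_eq, not_forall] using hω
      have : ∏ i ∈ S, A.indicator (1 : ℝ → ENNReal) (ξ i ω) = 0 :=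
        Finset.prod_eq_zero hi (Set.indicator_of_notMem hiA _)
      rw [this, zero_mul]
  have hindm : ∀ i : ℕ, Measurable fun ω => A.indicator (1 : ℝ → ENNReal) (ξ i ω) :=
    fun i => (measurable_one.indicator hA).comp (hxm i)
  have hG : Measurable fun ω => (∏ i ∈ S, A.indicator (1 : ℝ → ENNReal) (ξ i ω))
      * (ptilde ω A) ^ j :=
    (Finset.measurable_prod _ fun i _ => hindm i).mul
      (((Measure.measurable_coe hA).comp hpm).pow_const j)
  have hH : Measurable fun ω => (ptilde ω A) ^ (S.card + j) :=
    ((Measure.measurable_coe hA).comp hpm).pow_const _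
  have hGlt : ∀ ω, (∏ i ∈ S, A.indicator (1 : ℝ → ENNReal) (ξ i ω)) * (ptilde ω A) ^ j < ⊤ := by
    intro ω
    have h1 : (∏ i ∈ S, A.indicator (1 : ℝ → ENNReal) (ξ i ω)) ≤ 1 :=
      Finset.prod_le_one (fun i _ => zero_le)
        (fun i _ => by by_cases hi : ξ i ω ∈ A <;> simp [hi])
    exact lt_of_le_of_lt (mul_le_one' h1 (pow_le_one' (hle1 ω) j)) (by simp)
  have hHlt : ∀ ω, (ptilde ω A) ^ (S.card + j) < ⊤ :=
    fun ω => lt_of_le_of_lt (pow_le_one' (hle1 ω) _) (by simp)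
  have l1 := integral_toReal (μ := μ) hG.aemeasurable (Filter.Eventually.of_forall hGlt)
  have l2 := integral_toReal (μ := μ) hH.aemeasurable (Filter.Eventually.of_forall hHlt)
  have e3 : (fun ω => (∏ i ∈ S, A.indicator (1 : ℝ → ℝ) (ξ i ω)) * ((ptilde ω A).toReal) ^ j)
      = fun ω => ((∏ i ∈ S, A.indicator (1 : ℝ → ENNReal) (ξ i ω)) * (ptilde ω A) ^ j).toReal := by
    funext ω
    rw [ENNReal.toReal_mul, ENNReal.toReal_pow, ENNReal.toReal_prod]
    congr 1
    refine Finset.prod_congr rfl fun i _ => ?_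
    by_cases hi : ξ i ω ∈ A
    · rw [Set.indicator_of_mem hi, Set.indicator_of_mem hi]; rfl
    · rw [Set.indicator_of_notMem hi, Set.indicator_of_notMem hi]; rfl
  rw [hkey2] at l1
  calc ∫ ω, (∏ i ∈ S, A.indicator (1 : ℝ → ℝ) (ξ i ω)) * ((ptilde ω A).toReal) ^ j ∂μ
      = ∫ ω, ((∏ i ∈ S, A.indicator (1 : ℝ → ENNReal) (ξ i ω)) * (ptilde ω A) ^ j).toReal ∂μ := by
        rw [e3]
    _ = (∫⁻ ω, (ptilde ω A) ^ (S.card + j) ∂μ).toReal := l1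
    _ = ∫ ω, ((ptilde ω A) ^ (S.card + j)).toReal ∂μ := l2.symm
    _ = ∫ ω, ((ptilde ω A).toReal) ^ (S.card + j) ∂μ := by simp_rw [ENNReal.toReal_pow]
end L3
section L4
variable {Ω : Type*} [MeasurableSpace Ω] {μ : Measure Ω} [IsProbabilityMeasure μ]
  {ξ : ℕ → Ω → ℝ} {ptilde : Ω → Measure ℝ}

lemma variance_bound (h : CondIID μ ξ ptilde) {A : Set ℝ} (hA : MeasurableSet A) (n : ℕ) :
    ∫ ω, (∑ i ∈ Finset.range n,
        (A.indicator (1 : ℝ → ℝ) (ξ i ω) - (ptilde ω A).toReal)) ^ 2 ∂μ ≤ n := by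
  set I : ℕ → Ω → ℝ := fun i ω => A.indicator (1 : ℝ → ℝ) (ξ i ω) with hI
  set F : Ω → ℝ := fun ω => (ptilde ω A).toReal with hF
  have hFm : Measurable F := ((Measure.measurable_coe hA).comp h.2.1).ennreal_toReal
  have hIm : ∀ i, Measurable (I i) := fun i => (measurable_one.indicator hA).comp (h.2.2.1 i)
  have hF01 : ∀ ω, 0 ≤ F ω ∧ F ω ≤ 1 := by
    intro ω
    refine ⟨ENNReal.toReal_nonneg, ?_⟩
    have h1 : ptilde ω A ≤ 1 := by have := h.1 ω; exact prob_le_one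
    simpa using ENNReal.toReal_mono (by simp) h1
  have hI01 : ∀ i ω, 0 ≤ I i ω ∧ I i ω ≤ 1 := by
    intro i ω
    by_cases hi : ξ i ω ∈ A <;> simp [hI, hi]
  have hYabs : ∀ i ω, |I i ω - F ω| ≤ 1 := by
    intro i ω
    rw [abs_le]
    constructor <;> nlinarith [hF01 ω, hI01 i ω]
  have integ : ∀ f : Ω → ℝ, Measurable f → (∀ ω, |f ω| ≤ 1) → Integrable f μ := by
    intro f hf hb
    exact (integrable_const (1:ℝ)).mono' hf.aestronglyMeasurable (Filter.Eventually.of_forall hb)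
  have hYm : ∀ i, Measurable fun ω => I i ω - F ω := fun i => (hIm i).sub hFm
  have integYY : ∀ i j, Integrable (fun ω => (I i ω - F ω) * (I j ω - F ω)) μ := by
    intro i j
    refine integ _ ((hYm i).mul (hYm j)) fun ω => ?_
    rw [abs_mul]
    exact mul_le_one₀ (hYabs i ω) (abs_nonneg _) (hYabs j ω)
  -- moment identities
  have habs01 : ∀ (f g : Ω → ℝ), (∀ ω, 0 ≤ f ω ∧ f ω ≤ 1) → (∀ ω, 0 ≤ g ω ∧ g ω ≤ 1) →
      ∀ ω, |f ω * g ω| ≤ 1 := by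
    intro f g hf hg ω
    rw [abs_mul, abs_of_nonneg (hf ω).1, abs_of_nonneg (hg ω).1]
    exact mul_le_one₀ (hf ω).2 (hg ω).1 (hg ω).2
  have momA : ∀ i, ∫ ω, I i ω ∂μ = ∫ ω, F ω ∂μ := by
    intro i
    have := real_moment h {i} hA 0
    simpa [hI, hF] using this
  have momB : ∀ i, ∫ ω, I i ω * F ω ∂μ = ∫ ω, F ω ^ 2 ∂μ := by
    intro i
    have := real_moment h {i} hA 1
    simpa [hI, hF] using this
  have momC : ∀ i j, i ≠ j → ∫ ω, I i ω * I j ω ∂μ = ∫ ω, F ω ^ 2 ∂μ := by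
    intro i j hij
    have := real_moment h {i, j} hA 0
    rw [Finset.card_pair hij] at this
    simp only [Finset.prod_pair hij, pow_zero, mul_one] at this
    simpa [hI, hF] using this
  have cross : ∀ i j, i ≠ j → ∫ ω, (I i ω - F ω) * (I j ω - F ω) ∂μ = 0 := by
    intro i j hij
    have expand : ∀ ω, (I i ω - F ω) * (I j ω - F ω)
        = I i ω * I j ω - I i ω * F ω - I j ω * F ω + F ω ^ 2 := by intro ω; ring
    simp_rw [expand]
    have i1 : Integrable (fun ω => I i ω * I j ω) μ :=
      integ _ ((hIm i).mul (hIm j)) (habs01 _ _ (hI01 i) (hI01 j))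
    have i2 : Integrable (fun ω => I i ω * F ω) μ :=
      integ _ ((hIm i).mul hFm) (habs01 _ _ (hI01 i) hF01)
    have i3 : Integrable (fun ω => I j ω * F ω) μ :=
      integ _ ((hIm j).mul hFm) (habs01 _ _ (hI01 j) hF01)
    have i4 : Integrable (fun ω => F ω ^ 2) μ := by
      have : (fun ω => F ω ^ 2) = fun ω => F ω * F ω := by funext ω; ring
      rw [this]
      exact integ _ (hFm.mul hFm) (habs01 _ _ hF01 hF01)
    rw [integral_add (f := fun ω => I i ω * I j ω - I i ω * F ω - I j ω * F ω)
        (g := fun ω => F ω ^ 2) ((i1.sub i2).sub i3) i4,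
      integral_sub (f := fun ω => I i ω * I j ω - I i ω * F ω)
        (g := fun ω => I j ω * F ω) (i1.sub i2) i3,
      integral_sub i1 i2, momC i j hij, momB i, momB j]
    ring
  have diag : ∀ i, ∫ ω, (I i ω - F ω) * (I i ω - F ω) ∂μ ≤ 1 := by
    intro i
    calc ∫ ω, (I i ω - F ω) * (I i ω - F ω) ∂μ ≤ ∫ _ω, (1:ℝ) ∂μ := by
          refine integral_mono (integYY i i) (integrable_const 1) fun ω => ?_
          rw [← abs_mul_abs_self]
          exact mul_le_one₀ (hYabs i ω) (abs_nonneg _) (hYabs i ω)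
      _ = 1 := by simp
  -- expand the square of the sum
  have expand2 : ∀ ω, (∑ i ∈ Finset.range n, (I i ω - F ω)) ^ 2
      = ∑ i ∈ Finset.range n, ∑ j ∈ Finset.range n, (I i ω - F ω) * (I j ω - F ω) := by
    intro ω
    rw [sq, Finset.sum_mul_sum]
  show ∫ ω, (∑ i ∈ Finset.range n, (I i ω - F ω)) ^ 2 ∂μ ≤ n
  simp_rw [expand2]
  rw [integral_finset_sum _ fun i _ => integrable_finset_sum _ fun j _ => integYY i j]
  have : ∀ i ∈ Finset.range n,
      ∫ ω, ∑ j ∈ Finset.range n, (I i ω - F ω) * (I j ω - F ω) ∂μ ≤ 1 := by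
    intro i hi
    rw [integral_finset_sum _ fun j _ => integYY i j]
    rw [Finset.sum_eq_single_of_mem i hi (fun j _ hji => cross i j (Ne.symm hji))]
    exact diag i
  calc ∑ i ∈ Finset.range n, ∫ ω, ∑ j ∈ Finset.range n, (I i ω - F ω) * (I j ω - F ω) ∂μ
      ≤ ∑ _i ∈ Finset.range n, (1:ℝ) := Finset.sum_le_sum this
    _ = n := by simp
end L4
section L5
variable {Ω : Type*} [MeasurableSpace Ω] {μ : Measure Ω} [IsProbabilityMeasure μ]
  {ξ : ℕ → Ω → ℝ} {ptilde : Ω → Measure ℝ}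

lemma cheb (h : CondIID μ ξ ptilde) {A : Set ℝ} (hA : MeasurableSet A)
    {ε : ℝ} (hε : 0 < ε) {k : ℕ} (hk : 1 ≤ k) :
    μ {ω | ε * k ^ 2 ≤ |∑ i ∈ Finset.range (k ^ 2),
        (A.indicator (1 : ℝ → ℝ) (ξ i ω) - (ptilde ω A).toReal)|}
      ≤ ENNReal.ofReal (1 / (ε ^ 2 * k ^ 2)) := by
  set n := k ^ 2 with hn
  set S : Ω → ℝ := fun ω => ∑ i ∈ Finset.range n,
    (A.indicator (1 : ℝ → ℝ) (ξ i ω) - (ptilde ω A).toReal) with hS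
  have hFm : Measurable fun ω => (ptilde ω A).toReal :=
    ((Measure.measurable_coe hA).comp h.2.1).ennreal_toReal
  have hSm : Measurable S :=
    Finset.measurable_sum _ fun i _ =>
      ((measurable_one.indicator hA).comp (h.2.2.1 i)).sub hFm
  have hSb : ∀ ω, |S ω| ≤ n := by
    intro ω
    calc |S ω| ≤ ∑ i ∈ Finset.range n,
        |A.indicator (1 : ℝ → ℝ) (ξ i ω) - (ptilde ω A).toReal| := Finset.abs_sum_le_sum_abs _ _
      _ ≤ ∑ _i ∈ Finset.range n, (1:ℝ) := by
          refine Finset.sum_le_sum fun i _ => ?_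
          have h1 : ptilde ω A ≤ 1 := by have := h.1 ω; exact prob_le_one
          have h2 : (0:ℝ) ≤ (ptilde ω A).toReal := ENNReal.toReal_nonneg
          have h3 : (ptilde ω A).toReal ≤ 1 := by
            simpa using ENNReal.toReal_mono (by simp) h1
          have h4 : (0:ℝ) ≤ A.indicator (1 : ℝ → ℝ) (ξ i ω) ∧
              A.indicator (1 : ℝ → ℝ) (ξ i ω) ≤ 1 := by
            by_cases hi : ξ i ω ∈ A <;> simp [hi]
          rw [abs_le]; constructor <;> nlinarith [h4.1, h4.2]
      _ = n := by simp
  have hSq_int : Integrable (fun ω => S ω ^ 2) μ := by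
    refine (integrable_const ((n:ℝ) ^ 2)).mono' (hSm.pow_const 2).aestronglyMeasurable
      (Filter.Eventually.of_forall fun ω => ?_)
    have := hSb ω
    have h0 := abs_nonneg (S ω)
    simp only [Real.norm_eq_abs]
    rw [abs_of_nonneg (sq_nonneg _)]
    nlinarith [sq_abs (S ω)]
  have hvar : ∫ ω, S ω ^ 2 ∂μ ≤ n := variance_bound h hA n
  have hmk : (0:ℝ) < ε * k ^ 2 := by positivity
  have key := mul_meas_ge_le_lintegral₀ (μ := μ)
    (f := fun ω => ENNReal.ofReal (S ω ^ 2)) (hSm.pow_const 2).ennreal_ofReal.aemeasurable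
    (ENNReal.ofReal ((ε * k ^ 2) ^ 2))
  have hsubset : {ω | ε * k ^ 2 ≤ |S ω|}
      ⊆ {ω | ENNReal.ofReal ((ε * k ^ 2) ^ 2) ≤ ENNReal.ofReal (S ω ^ 2)} := by
    intro ω hω
    simp only [Set.mem_setOf_eq] at *
    refine ENNReal.ofReal_le_ofReal ?_
    calc (ε * k ^ 2) ^ 2 ≤ |S ω| ^ 2 := pow_le_pow_left₀ hmk.le hω 2
      _ = S ω ^ 2 := sq_abs _
  have hlin : ∫⁻ ω, ENNReal.ofReal (S ω ^ 2) ∂μ ≤ ENNReal.ofReal n := by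
    rw [← ofReal_integral_eq_lintegral_ofReal hSq_int
      (Filter.Eventually.of_forall fun ω => sq_nonneg _)]
    exact ENNReal.ofReal_le_ofReal hvar
  have hX0 : ENNReal.ofReal ((ε * k ^ 2) ^ 2) ≠ 0 :=
    (ENNReal.ofReal_pos.mpr (by positivity)).ne'
  have step : μ {ω | ε * k ^ 2 ≤ |S ω|}
      ≤ ENNReal.ofReal n / ENNReal.ofReal ((ε * k ^ 2) ^ 2) := by
    rw [ENNReal.le_div_iff_mul_le (Or.inl hX0) (Or.inl ENNReal.ofReal_ne_top)]
    calc μ {ω | ε * k ^ 2 ≤ |S ω|} * ENNReal.ofReal ((ε * k ^ 2) ^ 2)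
        ≤ μ {ω | ENNReal.ofReal ((ε * k ^ 2) ^ 2) ≤ ENNReal.ofReal (S ω ^ 2)}
          * ENNReal.ofReal ((ε * k ^ 2) ^ 2) :=
          mul_le_mul_left (measure_mono hsubset) _
      _ = ENNReal.ofReal ((ε * k ^ 2) ^ 2)
          * μ {ω | ENNReal.ofReal ((ε * k ^ 2) ^ 2) ≤ ENNReal.ofReal (S ω ^ 2)} := mul_comm _ _
      _ ≤ ∫⁻ ω, ENNReal.ofReal (S ω ^ 2) ∂μ := key
      _ ≤ ENNReal.ofReal n := hlin
  refine le_trans step (le_of_eq ?_)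
  rw [← ENNReal.ofReal_div_of_pos (by positivity)]
  congr 1
  have hk0 : (k:ℝ) ≠ 0 := Nat.cast_ne_zero.mpr (by omega)
  have hcast : ((n:ℕ):ℝ) = (k:ℝ) ^ 2 := by rw [hn]; push_cast; ring
  rw [hcast, div_eq_div_iff (by positivity) (by positivity)]
  ring
end L5

lemma tendsto_nat_sqrt_atTop : Tendsto Nat.sqrt atTop atTop := by
  apply tendsto_atTop_atTop.2
  intro b
  refine ⟨b ^ 2, fun n hn => ?_⟩
  have h1 := Nat.sqrt_le_sqrt hn
  rwa [Nat.sqrt_eq' b] at h1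

lemma ratio_up : Tendsto (fun k : ℕ => (((k:ℝ) + 1) ^ 2) / (k:ℝ) ^ 2) atTop (nhds 1) := by
  have h1 : Tendsto (fun k : ℕ => 1 + 1 / (k:ℝ)) atTop (nhds 1) := by
    have := tendsto_one_div_atTop_nhds_zero_nat (𝕜 := ℝ)
    simpa using tendsto_const_nhds.add this
  have h2 := (h1.mul h1)
  rw [mul_one] at h2
  refine h2.congr' ?_
  filter_upwards [eventually_ge_atTop 1] with k hk
  have hk0 : (k:ℝ) ≠ 0 := Nat.cast_ne_zero.mpr (by omega)
  field_simp

lemma ratio_down : Tendsto (fun k : ℕ => ((k:ℝ) ^ 2) / ((k:ℝ) + 1) ^ 2) atTop (nhds 1) := by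
  have h1 : Tendsto (fun k : ℕ => 1 - 1 / ((k:ℝ) + 1)) atTop (nhds 1) := by
    have := tendsto_one_div_add_atTop_nhds_zero_nat (𝕜 := ℝ)
    simpa using tendsto_const_nhds.sub this
  have h2 := (h1.mul h1)
  rw [mul_one] at h2
  refine h2.congr' ?_
  filter_upwards [eventually_ge_atTop 1] with k hk
  have hk0 : (k:ℝ) + 1 ≠ 0 := by positivity
  field_simp
  ring

lemma sandwich {a : ℕ → ℝ} (mono : Monotone a) (nonneg : ∀ n, 0 ≤ a n) {L : ℝ}
    (hsq : Tendsto (fun k : ℕ => a (k ^ 2) / ((k:ℝ) ^ 2)) atTop (nhds L)) :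
    Tendsto (fun n : ℕ => a n / n) atTop (nhds L) := by
  -- upper sequence
  have hupper : Tendsto (fun k : ℕ => a ((k + 1) ^ 2) / ((k:ℝ) ^ 2)) atTop (nhds L) := by
    have hshift : Tendsto (fun k : ℕ => a ((k + 1) ^ 2) / (((k:ℝ) + 1) ^ 2)) atTop (nhds L) := by
      have := hsq.comp (tendsto_add_atTop_nat 1)
      refine this.congr fun k => ?_
      simp only [Function.comp_apply]
      norm_num [Nat.cast_add]
    have := hshift.mul ratio_up
    rw [mul_one] at this
    refine this.congr' ?_
    filter_upwards [eventually_ge_atTop 1] with k hk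
    have hk0 : (k:ℝ) ≠ 0 := Nat.cast_ne_zero.mpr (by omega)
    have hk1 : ((k:ℝ) + 1) ≠ 0 := by positivity
    field_simp
  have hlower : Tendsto (fun k : ℕ => a (k ^ 2) / (((k:ℝ) + 1) ^ 2)) atTop (nhds L) := by
    have := hsq.mul ratio_down
    rw [mul_one] at this
    refine this.congr' ?_
    filter_upwards [eventually_ge_atTop 1] with k hk
    have hk0 : (k:ℝ) ≠ 0 := Nat.cast_ne_zero.mpr (by omega)
    have hk1 : ((k:ℝ) + 1) ≠ 0 := by positivity
    field_simp
  refine tendsto_of_tendsto_of_tendsto_of_le_of_le' (hlower.comp tendsto_nat_sqrt_atTop)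
    (hupper.comp tendsto_nat_sqrt_atTop) ?_ ?_
  · filter_upwards [eventually_ge_atTop 1] with n hn
    simp only [Function.comp_apply]
    have hle : Nat.sqrt n ^ 2 ≤ n := Nat.sqrt_le' n
    have hlt : n < (Nat.sqrt n + 1) ^ 2 := Nat.lt_succ_sqrt' n
    have hn0 : (0:ℝ) < n := by positivity
    have hcast : ((Nat.sqrt n : ℝ) + 1) ^ 2 = ((Nat.sqrt n + 1 : ℕ) ^ 2 : ℝ) := by push_cast; ring
    refine div_le_div₀ (nonneg n) (mono hle) hn0 ?_
    rw [hcast]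
    exact_mod_cast le_of_lt hlt
  · filter_upwards [eventually_ge_atTop 1] with n hn
    simp only [Function.comp_apply]
    have hs1 : 1 ≤ Nat.sqrt n := by
      have := Nat.sqrt_le_sqrt hn
      simpa using this
    have hle : Nat.sqrt n ^ 2 ≤ n := Nat.sqrt_le' n
    have hlt : n ≤ (Nat.sqrt n + 1) ^ 2 := le_of_lt (Nat.lt_succ_sqrt' n)
    have hs0 : (0:ℝ) < (Nat.sqrt n : ℝ) ^ 2 := by
      have : (0:ℝ) < (Nat.sqrt n : ℝ) := by exact_mod_cast hs1
      positivity
    refine div_le_div₀ (nonneg _) (mono hlt) hs0 ?_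
    exact_mod_cast hle
section L6
variable {Ω : Type*} [MeasurableSpace Ω] {μ : Measure Ω} [IsProbabilityMeasure μ]
  {ξ : ℕ → Ω → ℝ} {ptilde : Ω → Measure ℝ}

lemma slln (h : CondIID μ ξ ptilde) {A : Set ℝ} (hA : MeasurableSet A) :
    ∀ᵐ ω ∂μ, Filter.Tendsto
      (fun n : ℕ => (∑ i ∈ Finset.range n, A.indicator (1 : ℝ → ℝ) (ξ i ω)) / n)
      Filter.atTop (nhds ((ptilde ω A).toReal)) := by
  set F : Ω → ℝ := fun ω => (ptilde ω A).toReal with hF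
  set S : ℕ → Ω → ℝ := fun n ω => ∑ i ∈ Finset.range n,
    (A.indicator (1 : ℝ → ℝ) (ξ i ω) - F ω) with hS
  have stepA : ∀ j : ℕ, ∀ᵐ ω ∂μ, ∀ᶠ k : ℕ in Filter.atTop,
      ω ∉ {ω | (1 / ((j:ℝ) + 1)) * (k:ℝ) ^ 2 ≤ |S (k ^ 2) ω|} := by
    intro j
    set ε : ℝ := 1 / ((j:ℝ) + 1) with hεdef
    have hε : 0 < ε := by positivity
    refine ae_eventually_notMem (ne_of_lt ?_)
    have hbound : ∀ k : ℕ, μ {ω | ε * (k:ℝ) ^ 2 ≤ |S (k ^ 2) ω|}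
        ≤ (if k = 0 then 1 else 0) + ENNReal.ofReal (1 / (ε ^ 2 * (k:ℝ) ^ 2)) := by
      intro k
      rcases Nat.eq_zero_or_pos k with hk | hk
      · subst hk
        refine le_trans prob_le_one ?_
        simp
      · have hcheb := cheb h hA hε hk
        have hk0 : ¬ k = 0 := by omega
        simp only [hS, hF, if_neg hk0, zero_add]
        simpa using hcheb
    calc ∑' k : ℕ, μ {ω | ε * (k:ℝ) ^ 2 ≤ |S (k ^ 2) ω|}
        ≤ ∑' k : ℕ, ((if k = 0 then 1 else 0) + ENNReal.ofReal (1 / (ε ^ 2 * (k:ℝ) ^ 2))) :=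
          ENNReal.tsum_le_tsum hbound
      _ = (∑' k : ℕ, (if k = 0 then (1:ENNReal) else 0))
          + ∑' k : ℕ, ENNReal.ofReal (1 / (ε ^ 2 * (k:ℝ) ^ 2)) := ENNReal.tsum_add
      _ < ⊤ := by
          have hsummable : Summable (fun k : ℕ => 1 / (ε ^ 2 * (k:ℝ) ^ 2)) := by
            have base : Summable (fun k : ℕ => 1 / (k:ℝ) ^ 2) :=
              Real.summable_one_div_nat_pow.mpr one_lt_two
            have := base.mul_left (1 / ε ^ 2)
            refine this.congr fun k => ?_
            field_simp
          have e2 : ∑' k : ℕ, ENNReal.ofReal (1 / (ε ^ 2 * (k:ℝ) ^ 2))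
              = ENNReal.ofReal (∑' k : ℕ, 1 / (ε ^ 2 * (k:ℝ) ^ 2)) :=
            (ENNReal.ofReal_tsum_of_nonneg (fun k => by positivity) hsummable).symm
          have e1 : ∑' k : ℕ, (if k = 0 then (1:ENNReal) else 0) = 1 := by
            rw [tsum_eq_single 0 (fun b hb => if_neg hb)]
            simp
          rw [e1, e2]
          exact ENNReal.add_lt_top.mpr ⟨ENNReal.one_lt_top, ENNReal.ofReal_lt_top⟩
  have stepB : ∀ᵐ ω ∂μ, Filter.Tendsto
      (fun k : ℕ => (∑ i ∈ Finset.range (k ^ 2), A.indicator (1 : ℝ → ℝ) (ξ i ω)) / ((k:ℝ) ^ 2))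
      Filter.atTop (nhds (F ω)) := by
    filter_upwards [ae_all_iff.mpr stepA] with ω hω
    have h0 : Filter.Tendsto (fun k : ℕ => S (k ^ 2) ω / ((k:ℝ) ^ 2)) Filter.atTop (nhds 0) := by
      rw [Metric.tendsto_atTop]
      intro δ hδ
      obtain ⟨j, hj⟩ := exists_nat_one_div_lt hδ
      obtain ⟨N1, hN1⟩ := (Filter.eventually_atTop.mp (hω j))
      refine ⟨max N1 1, fun k hk => ?_⟩
      have hk1 : 1 ≤ k := le_trans (le_max_right _ _) hk
      have hkN := le_trans (le_max_left _ _) hk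
      have hnotin := hN1 k hkN
      simp only [Set.mem_setOf_eq, not_le] at hnotin
      have hk0 : (0:ℝ) < (k:ℝ) ^ 2 := by
        have : (0:ℝ) < (k:ℝ) := by exact_mod_cast hk1
        positivity
      rw [Real.dist_eq, sub_zero, abs_div, abs_of_nonneg (le_of_lt hk0), div_lt_iff₀ hk0]
      calc |S (k ^ 2) ω| < (1 / ((j:ℝ) + 1)) * (k:ℝ) ^ 2 := hnotin
        _ < δ * (k:ℝ) ^ 2 := by
            apply mul_lt_mul_of_pos_right hj hk0
    have h1 := h0.add_const (F ω)
    rw [zero_add] at h1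
    refine h1.congr' ?_
    filter_upwards [Filter.eventually_ge_atTop 1] with k hk
    have hk0 : ((k:ℝ) ^ 2) ≠ 0 := by
      have : (0:ℝ) < (k:ℝ) := by exact_mod_cast hk
      positivity
    have hsum : S (k ^ 2) ω = (∑ i ∈ Finset.range (k ^ 2), A.indicator (1 : ℝ → ℝ) (ξ i ω))
        - (k:ℝ) ^ 2 * F ω := by
      show (∑ i ∈ Finset.range (k ^ 2), (A.indicator (1 : ℝ → ℝ) (ξ i ω) - F ω)) = _
      rw [Finset.sum_sub_distrib, Finset.sum_const, Finset.card_range]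
      push_cast
      ring
    rw [hsum]
    field_simp
    ring
  filter_upwards [stepB] with ω hω
  refine sandwich ?_ ?_ hω
  · intro m n hmn
    refine Finset.sum_le_sum_of_subset_of_nonneg (Finset.range_subset_range.mpr hmn) fun i _ _ => ?_
    by_cases hi : ξ i ω ∈ A <;> simp [hi]
  · intro n
    refine Finset.sum_nonneg fun i _ => ?_
    by_cases hi : ξ i ω ∈ A <;> simp [hi]
end L6

lemma median_Iic {p : Measure ℝ} [IsProbabilityMeasure p]
    (hint : Integrable (fun x => |x|) p) {m : ℝ}
    (hmin : ∀ θ : ℝ, ∫ x, |x - m| ∂p ≤ ∫ x, |x - θ| ∂p)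
    (huniq : ∀ m' : ℝ, (∀ θ : ℝ, ∫ x, |x - m'| ∂p ≤ ∫ x, |x - θ| ∂p) → m' = m) :
    (∀ q : ℝ, m < q → 1/2 < (p (Set.Iic q)).toReal) ∧
    (∀ q : ℝ, q < m → (p (Set.Iic q)).toReal < 1/2) := by
  have hintθ : ∀ θ : ℝ, Integrable (fun x => |x - θ|) p := by
    intro θ
    refine (hint.add (integrable_const |θ|)).mono'
      ((continuous_id.sub continuous_const).abs.aestronglyMeasurable) ?_
    refine Filter.Eventually.of_forall fun x => ?_
    rw [Real.norm_eq_abs, abs_abs]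
    calc |x - θ| ≤ |x| + |θ| := abs_sub _ _
      _ = _ := rfl
  have hIic_toReal : ∀ q : ℝ, (p (Set.Iic q)).toReal + (p (Set.Ioi q)).toReal = 1 := by
    intro q
    have h1 : p (Set.Iic q) + p (Set.Ioi q) = 1 := by
      rw [← measure_union (by simp [Set.disjoint_left]) measurableSet_Ioi]
      simp [Set.Iic_union_Ioi]
    have h2 : p (Set.Iic q) ≠ ⊤ := measure_ne_top _ _
    have h3 : p (Set.Ioi q) ≠ ⊤ := measure_ne_top _ _
    rw [← ENNReal.toReal_add h2 h3, h1]
    simp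
  have key : ∀ q s, MeasurableSet s → ∀ c : ℝ,
      (∀ x : ℝ, |x - q| ≤ |x - m| + c * (1 - 2 * s.indicator (1 : ℝ → ℝ) x)) →
      ∫ x, |x - q| ∂p ≤ ∫ x, |x - m| ∂p + c * (1 - 2 * (p s).toReal) := by
    intro q s hs c hptwise
    have hind : Integrable (s.indicator (1 : ℝ → ℝ)) p :=
      (integrable_const (1:ℝ)).indicator hs
    have hrhs : Integrable (fun x => |x - m| + c * (1 - 2 * s.indicator (1 : ℝ → ℝ) x)) p :=
      (hintθ m).add ((((integrable_const (1:ℝ)).sub (hind.const_mul 2))).const_mul c)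
    calc ∫ x, |x - q| ∂p ≤ ∫ x, |x - m| + c * (1 - 2 * s.indicator (1 : ℝ → ℝ) x) ∂p :=
          integral_mono (hintθ q) hrhs hptwise
      _ = ∫ x, |x - m| ∂p + c * (1 - 2 * (p s).toReal) := by
          have hind2 : Integrable (fun x => 2 * s.indicator (1 : ℝ → ℝ) x) p := hind.const_mul 2
          have h1 : Integrable (fun x => 1 - 2 * s.indicator (1 : ℝ → ℝ) x) p :=
            (integrable_const 1).sub hind2
          have hg : Integrable (fun x => c * (1 - 2 * s.indicator (1 : ℝ → ℝ) x)) p :=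
            h1.const_mul c
          rw [integral_add (hintθ m) hg, integral_const_mul,
            integral_sub (integrable_const 1) hind2, integral_const_mul, integral_const,
            integral_indicator_one hs]
          simp [Measure.real]
  constructor
  · -- q > m implies F q > 1/2
    intro q hq
    by_contra hc
    push_neg at hc
    have hIoi : 1/2 ≤ (p (Set.Ioi q)).toReal := by
      have := hIic_toReal q; linarith
    have hpt : ∀ x : ℝ, |x - q| ≤ |x - m| + (q - m) * (1 - 2 * (Set.Ioi q).indicator (1:ℝ→ℝ) x) := by
      intro x
      by_cases hx : q < x
      · rw [Set.indicator_of_mem (Set.mem_Ioi.mpr hx)]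
        have e1 : |x - q| = x - q := abs_of_pos (by linarith)
        have e2 : |x - m| = x - m := abs_of_pos (by linarith)
        rw [e1, e2]; simp only [Pi.one_apply]; nlinarith
      · rw [Set.indicator_of_notMem (fun hmem => hx (Set.mem_Ioi.mp hmem))]
        push_neg at hx
        have e1 : |x - q| = q - x := by rw [abs_of_nonpos (by linarith)]; ring
        have h2 : m - x ≤ |x - m| := by
          have := neg_abs_le (x - m); linarith [abs_nonneg (x - m), neg_abs_le (x - m)]
        rw [e1]; simp only [mul_zero, sub_zero, mul_one]; linarith
    have hle := key q (Set.Ioi q) measurableSet_Ioi (q - m) hpt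
    have hterm : (q - m) * (1 - 2 * (p (Set.Ioi q)).toReal) ≤ 0 := by
      apply mul_nonpos_of_nonneg_of_nonpos (by linarith) (by linarith)
    have hqmin : ∀ θ : ℝ, ∫ x, |x - q| ∂p ≤ ∫ x, |x - θ| ∂p := by
      intro θ
      calc ∫ x, |x - q| ∂p ≤ ∫ x, |x - m| ∂p := by linarith
        _ ≤ ∫ x, |x - θ| ∂p := hmin θ
    have := huniq q hqmin
    linarith
  · intro q hq
    by_contra hc
    push_neg at hc
    have hpt : ∀ x : ℝ, |x - q| ≤ |x - m| + (m - q) * (1 - 2 * (Set.Iic q).indicator (1:ℝ→ℝ) x) := by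
      intro x
      by_cases hx : x ≤ q
      · rw [Set.indicator_of_mem (Set.mem_Iic.mpr hx)]
        have e1 : |x - q| = q - x := by rw [abs_of_nonpos (by linarith)]; ring
        have e2 : |x - m| = m - x := by rw [abs_of_nonpos (by linarith)]; ring
        rw [e1, e2]; simp only [Pi.one_apply]; nlinarith
      · rw [Set.indicator_of_notMem (fun hmem => hx (Set.mem_Iic.mp hmem))]
        push_neg at hx
        have e1 : |x - q| = x - q := abs_of_pos (by linarith)
        have h2 : x - m ≤ |x - m| := le_abs_self _
        rw [e1]; simp only [mul_zero, sub_zero, mul_one]; linarith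
    have hle := key q (Set.Iic q) measurableSet_Iic (m - q) hpt
    have hterm : (m - q) * (1 - 2 * (p (Set.Iic q)).toReal) ≤ 0 := by
      apply mul_nonpos_of_nonneg_of_nonpos (by linarith) (by linarith)
    have hqmin : ∀ θ : ℝ, ∫ x, |x - q| ∂p ≤ ∫ x, |x - θ| ∂p := by
      intro θ
      calc ∫ x, |x - q| ∂p ≤ ∫ x, |x - m| ∂p := by linarith
        _ ≤ ∫ x, |x - θ| ∂p := hmin θ
    have := huniq q hqmin
    linarith

lemma tendsto_sample_median (x : ℕ → ℝ) (Mn : ℕ → ℝ) (m : ℝ) (G : ℚ → ℝ)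
    (hcard1 : ∀ N : ℕ, N + 1 ≤ ((Finset.range (2*N+1)).filter fun i => x i ≤ Mn N).card)
    (hcard2 : ∀ N : ℕ, N + 1 ≤ ((Finset.range (2*N+1)).filter fun i => Mn N ≤ x i).card)
    (hconv : ∀ q : ℚ, Tendsto (fun n : ℕ =>
      (∑ i ∈ Finset.range n, (Set.Iic (q:ℝ)).indicator (1:ℝ→ℝ) (x i)) / n) atTop (nhds (G q)))
    (hup : ∀ q : ℚ, m < (q:ℝ) → 1/2 < G q) (hdown : ∀ q : ℚ, (q:ℝ) < m → G q < 1/2) :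
    Tendsto Mn atTop (nhds m) := by
  classical
  have hsum_eq : ∀ (n : ℕ) (q : ℚ),
      (∑ i ∈ Finset.range n, (Set.Iic (q:ℝ)).indicator (1:ℝ→ℝ) (x i))
        = (((Finset.range n).filter fun i => x i ≤ (q:ℝ)).card : ℝ) := by
    intro n q
    rw [Finset.card_filter]
    push_cast
    refine Finset.sum_congr rfl fun i _ => ?_
    by_cases hi : x i ≤ (q:ℝ) <;> simp [Set.indicator_apply, hi]
  have hN : Tendsto (fun N : ℕ => 2 * N + 1) atTop atTop :=
    tendsto_atTop_atTop.2 fun b => ⟨b, fun n hn => by omega⟩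
  rw [Metric.tendsto_atTop]
  intro ε hε
  obtain ⟨q2, hq2a, hq2b⟩ := exists_rat_btwn (show m < m + ε by linarith)
  obtain ⟨q1, hq1a, hq1b⟩ := exists_rat_btwn (show m - ε < m by linarith)
  have hup2 : ∀ᶠ N in atTop, Mn N ≤ (q2:ℝ) := by
    have ht := (hconv q2).comp hN
    have hev := ht.eventually_const_lt (hup q2 hq2a)
    filter_upwards [hev] with N hNval
    simp only [Function.comp_apply] at hNval
    rw [hsum_eq] at hNval
    set c2 := ((Finset.range (2*N+1)).filter fun i => x i ≤ (q2:ℝ)).card with hc2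
    have hpos : (0:ℝ) < ((2*N+1 : ℕ):ℝ) := by positivity
    rw [lt_div_iff₀ hpos] at hNval
    have hcount : N + 1 ≤ c2 := by
      have h2 : ((2*N+1 : ℕ):ℝ) < 2 * (c2:ℝ) := by linarith
      have h3 : (2*N+1 : ℕ) < 2 * c2 := by exact_mod_cast h2
      omega
    by_contra hM2
    push_neg at hM2
    set D1 := (Finset.range (2*N+1)).filter fun i => x i ≤ (q2:ℝ) with hD1
    set D2 := (Finset.range (2*N+1)).filter fun i => Mn N ≤ x i with hD2
    have hdisj : Disjoint D1 D2 := by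
      rw [Finset.disjoint_left]
      intro i hi1 hi2
      rw [hD1, Finset.mem_filter] at hi1
      rw [hD2, Finset.mem_filter] at hi2
      linarith [hi1.2, hi2.2]
    have hcup : D1.card + D2.card ≤ 2*N+1 := by
      rw [← Finset.card_union_of_disjoint hdisj]
      calc (D1 ∪ D2).card ≤ (Finset.range (2*N+1)).card :=
            Finset.card_le_card (Finset.union_subset (Finset.filter_subset _ _)
              (Finset.filter_subset _ _))
        _ = 2*N+1 := Finset.card_range _
    have h5 : N + 1 ≤ D2.card := hcard2 N
    have h6 : c2 = D1.card := rfl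
    omega
  have hlow2 : ∀ᶠ N in atTop, (q1:ℝ) < Mn N := by
    have ht := (hconv q1).comp hN
    have hev := ht.eventually_lt_const (hdown q1 hq1b)
    filter_upwards [hev] with N hNval
    simp only [Function.comp_apply] at hNval
    rw [hsum_eq] at hNval
    set c1 := ((Finset.range (2*N+1)).filter fun i => x i ≤ (q1:ℝ)).card with hc1
    have hpos : (0:ℝ) < ((2*N+1 : ℕ):ℝ) := by positivity
    rw [div_lt_iff₀ hpos] at hNval
    have hcount : c1 ≤ N := by
      have h2 : 2 * (c1:ℝ) < ((2*N+1 : ℕ):ℝ) := by linarith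
      have h3 : 2 * c1 < 2*N+1 := by exact_mod_cast h2
      omega
    by_contra hM1
    push_neg at hM1
    have hsub : ((Finset.range (2*N+1)).filter fun i => x i ≤ Mn N)
        ⊆ (Finset.range (2*N+1)).filter fun i => x i ≤ (q1:ℝ) := by
      intro i hi
      rw [Finset.mem_filter] at hi ⊢
      exact ⟨hi.1, le_trans hi.2 hM1⟩
    have := hcard1 N
    have := Finset.card_le_card hsub
    omega
  rw [eventually_atTop] at hup2 hlow2
  obtain ⟨N2, hN2⟩ := hup2
  obtain ⟨N1, hN1⟩ := hlow2
  refine ⟨max N1 N2, fun N hNN => ?_⟩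
  have h1 := hN1 N (le_trans (le_max_left _ _) hNN)
  have h2 := hN2 N (le_trans (le_max_right _ _) hNN)
  rw [Real.dist_eq, abs_lt]
  constructor <;> linarith

/-- If `p̃` has a.s. a unique median (the unique minimizer of `θ ↦ ∫|x-θ| dp̃`) and
`∫|x| dp̃ < ∞` a.s., then the sample median `M_N` of `ξ₁,...,ξ_{2N+1}` converges in
distribution to `med(p̃)`. -/
theorem stmt13 {Ω : Type*} [MeasurableSpace Ω] (μ : Measure Ω) [IsProbabilityMeasure μ]
    (ξ : ℕ → Ω → ℝ) (ptilde : Ω → Measure ℝ) (h : CondIID μ ξ ptilde)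
    (hint : ∀ᵐ ω ∂μ, Integrable (fun x => |x|) (ptilde ω))
    (med : Ω → ℝ) (hmedmeas : Measurable med)
    (hmed : ∀ᵐ ω ∂μ,
      (∀ θ : ℝ, ∫ x, |x - med ω| ∂ptilde ω ≤ ∫ x, |x - θ| ∂ptilde ω) ∧
      (∀ m' : ℝ, (∀ θ : ℝ, ∫ x, |x - m'| ∂ptilde ω ≤ ∫ x, |x - θ| ∂ptilde ω) →
        m' = med ω))
    (M : ℕ → Ω → ℝ) (hMmeas : ∀ N, Measurable (M N)) (hM : IsSampleMedianSeq ξ M) :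
    ∀ g : BoundedContinuousFunction ℝ ℝ,
      Tendsto (fun N : ℕ => ∫ ω, g (M N ω) ∂μ) atTop (nhds (∫ ω, g (med ω) ∂μ)) := by
  intro g
  have hslln := ae_all_iff.mpr (fun q : ℚ => slln h (measurableSet_Iic (a := (q:ℝ))))
  have hconv : ∀ᵐ ω ∂μ, Tendsto (fun N => M N ω) atTop (nhds (med ω)) := by
    filter_upwards [hint, hmed, hslln] with ω hω1 hω2 hω3
    haveI := h.1 ω
    have hmedian := median_Iic hω1 hω2.1 hω2.2
    exact tendsto_sample_median (fun i => ξ i ω) (fun N => M N ω) (med ω)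
      (fun q => (ptilde ω (Set.Iic (q:ℝ))).toReal)
      (fun N => (hM N ω).1) (fun N => (hM N ω).2.1) (fun q => hω3 q)
      (fun q hq => hmedian.1 (q:ℝ) hq) (fun q hq => hmedian.2 (q:ℝ) hq)
  refine tendsto_integral_of_dominated_convergence (fun _ => ‖g‖)
    (fun N => (g.continuous.measurable.comp (hMmeas N)).aestronglyMeasurable)
    (integrable_const _)
    (fun N => Filter.Eventually.of_forall fun ω => g.norm_coe_le_norm (M N ω)) ?_
  filter_upwards [hconv] with ω hω
  exact (g.continuous.tendsto (med ω)).comp hω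
end
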